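/- arXiv:math/0012150 — 6 statements merged into one kernel-verified Lean document; each statement's English description precedes it below -/
import Mathlib

section
/- Let K be a field, a ∈ K, and suppose the polynomial T^p − a is irreducible over K for a prime p, with L = K(c) where c^p = a. Then for every x ∈ K, the field norm N_{L/K}(1 − x·c) equals 1 − x^p·a. -/
open Polynomial

/-- If `T^p - a` is irreducible over `K` for a prime `p`, and `L = K(c)` with `c^p = a`,
then for every `x ∈ K` the field norm `N_{L/K}(1 - x·c)` equals `1 - x^p·a`. -/
theorem norm_one_sub_mul_root_of_prime_pow
    (K : Type*) [Field K] (p : ℕ) (hp : p.Prime) (a : K)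
    (hirr : Irreducible (X ^ p - C a)) (x : K) :
    Algebra.norm K
        (1 - algebraMap K (AdjoinRoot (X ^ p - C a)) x * AdjoinRoot.root (X ^ p - C a))
      = 1 - x ^ p * a := by
  haveI := Fact.mk hirr
  set f : K[X] := X ^ p - C a with hf_def
  have hpne : p ≠ 0 := hp.ne_zero
  have hfmonic : f.Monic := monic_X_pow_sub_C a hpne
  have hfne : f ≠ 0 := hfmonic.ne_zero
  have hfdeg : f.natDegree = p := by
    simpa [hf_def] using natDegree_X_pow_sub_C (n := p) (a := a)
  set L := AdjoinRoot f
  set c : L := AdjoinRoot.root f with hc_def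
  have hcp : c ^ p = algebraMap K L a := by
    have h0 : f.eval₂ (AdjoinRoot.of f) c = 0 := AdjoinRoot.eval₂_root f
    have : c ^ p - (AdjoinRoot.of f) a = 0 := by
      simpa [hf_def] using h0
    have := sub_eq_zero.mp this
    exact this
  rcases eq_or_ne x 0 with rfl | hx
  · simp [zero_pow hpne]
  · set pb : PowerBasis K L := AdjoinRoot.powerBasis hfne with hpb
    have hpbdim : pb.dim = p := by
      simp [hpb, AdjoinRoot.powerBasis, hfdeg]
    haveI : FiniteDimensional K L := Module.Finite.of_basis pb.basis
    set u : L := 1 - algebraMap K L x * c with hu_def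
    have hu_int : IsIntegral K u := IsIntegral.of_finite K u
    have hmem : pb.gen ∈ Algebra.adjoin K ({u} : Set L) := by
      have hgen : pb.gen = c := by simp [hpb, AdjoinRoot.powerBasis, hc_def]
      have : c = algebraMap K L x⁻¹ * (1 - u) := by
        rw [hu_def]
        rw [sub_sub_cancel, ← mul_assoc, ← map_mul, inv_mul_cancel₀ hx, map_one, one_mul]
      rw [hgen, this]
      exact mul_mem (Subalgebra.algebraMap_mem _ _)
        (sub_mem (one_mem _) (Algebra.self_mem_adjoin_singleton K u))
    set pb' : PowerBasis K L := PowerBasis.ofAdjoinEqTop' hu_int (PowerBasis.adjoin_eq_top_of_gen_mem_adjoin hmem) with hpb'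
    have hgen' : pb'.gen = u := by simp [hpb']
    have hdim' : pb'.dim = (minpoly K u).natDegree := by
      simp [hpb']
    -- the degree of minpoly of u is p
    have hdim'p : pb'.dim = p := by
      have h1 := pb.finrank
      have h2 := pb'.finrank
      rw [hpbdim] at h1
      omega
    have hmindeg : (minpoly K u).natDegree = p := by rw [← hdim', hdim'p]
    -- the minimal polynomial of u
    set q : K[X] := (X - C 1) ^ p - C ((-1 : K) ^ p * (x ^ p * a)) with hq_def
    have hqmonic : q.Monic := by
      have h1 : ((X - C (1 : K)) ^ p).Monic := Monic.pow (monic_X_sub_C (1 : K)) (n := p)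
      have : q = (X - C (1 : K)) ^ p + C (-((-1 : K) ^ p * (x ^ p * a))) := by
        rw [hq_def, map_neg, sub_eq_add_neg]
      rw [this]
      refine h1.add_of_left ?_
      calc degree (C (-((-1 : K) ^ p * (x ^ p * a)))) ≤ 0 := degree_C_le
        _ < p := by exact_mod_cast Nat.cast_pos.mpr hp.pos
        _ = degree ((X - C (1 : K)) ^ p) := by
            rw [degree_pow, degree_X_sub_C]; simp
    have haev : Polynomial.aeval u q = 0 := by
      have : (u - 1 : L) ^ p = algebraMap K L ((-1) ^ p * (x ^ p * a)) := by
        have : (u - 1 : L) = -(algebraMap K L x * c) := by rw [hu_def]; ring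
        rw [this, neg_pow, mul_pow, hcp, ← map_pow]
        simp only [map_mul, map_pow, map_neg, map_one]
      simp only [hq_def, map_sub, map_pow, map_one, aeval_X, aeval_C]
      rw [this]
      ring
    have hq : minpoly K u = q := by
      have hdvd : minpoly K u ∣ q := minpoly.dvd K u haev
      have hqdeg : q.natDegree = p := natDegree_eq_of_degree_eq_some ?_
      · refine Polynomial.eq_of_monic_of_associated (minpoly.monic hu_int) hqmonic ?_
        exact associated_of_dvd_of_natDegree_le hdvd hqmonic.ne_zero
          (by rw [hqdeg, hmindeg])
      · rw [hq_def]
        have h1 : degree ((X - C (1 : K)) ^ p) = (p : WithBot ℕ) := by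
          rw [degree_pow, degree_X_sub_C]; simp
        rw [degree_sub_eq_left_of_degree_lt, h1]
        rw [h1]
        calc degree (C ((-1 : K) ^ p * (x ^ p * a))) ≤ 0 := degree_C_le
          _ < p := by exact_mod_cast Nat.cast_pos.mpr hp.pos
    have hnorm := Algebra.PowerBasis.norm_gen_eq_coeff_zero_minpoly pb'
    rw [hgen', hq, hdim'p] at hnorm
    rw [hu_def] at hnorm
    rw [hnorm]
    have hcoeff : q.coeff 0 = (-1 : K) ^ p * (1 - x ^ p * a) := by
      rw [hq_def]
      rw [coeff_sub, coeff_C_zero, coeff_zero_eq_eval_zero]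
      simp [eval_pow]
      ring
    rw [hcoeff]
    rw [← mul_assoc, ← mul_pow]
    simp
end

section
/- Let K be a finite field. Then the Milnor K-group K_q(K) vanishes for all q ≥ 2. In particular, for any two units a, b ∈ K^×, the Steinberg symbol {a, b} in K_2(K) is trivial. -/
open scoped TensorProduct

/-- The Steinberg relations submodule: generated by tensors `a₁ ⊗ ... ⊗ a_q` with
`a_i + a_j = 1` for some `i ≠ j`. -/
def MilnorRel (K : Type*) [Field K] (q : ℕ) :
    Submodule ℤ (⨂[ℤ] _ : Fin q, Additive Kˣ) :=
  Submodule.span ℤ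
    {t | ∃ a : Fin q → Kˣ, (∃ i j : Fin q, i ≠ j ∧ (a i : K) + (a j : K) = 1) ∧
      t = PiTensorProduct.tprod ℤ fun i => Additive.ofMul (a i)}

/-- The `q`-th Milnor K-group of a field: the quotient of the `q`-th tensor power of `K^×`
by the Steinberg relations. -/
def MilnorK (K : Type*) [Field K] (q : ℕ) :=
  (⨂[ℤ] _ : Fin q, Additive Kˣ) ⧸ MilnorRel K q

section Aux

open Function

set_option linter.unnecessarySimpa false in
lemma exists_nonsquare_pair {K : Type*} [Field K] [Fintype K] {c : K} (hc : ¬ IsSquare c) :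
    ∃ a b : K, ¬ IsSquare a ∧ ¬ IsSquare b ∧ a + b = 1 := by
  classical
  by_contra h
  push_neg at h
  have h1 : ∀ a : K, ¬ IsSquare a → IsSquare (1 - a) := by
    intro a ha
    by_contra hb
    exact h a (1 - a) ha hb (by ring)
  have hc0 : c ≠ 0 := fun e => hc (e ▸ ⟨0, by simp⟩)
  set NS : Finset K := Finset.univ.filter (fun x => ¬ IsSquare x) with hNSdef
  set SQ0 : Finset K := Finset.univ.filter (fun x => IsSquare x ∧ x ≠ 0) with hSQ0def
  set SQ1 : Finset K := Finset.univ.filter (fun x => IsSquare x ∧ x ≠ 0 ∧ x ≠ 1) with hSQ1def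
  have card1 : NS.card ≤ SQ1.card := by
    apply Finset.card_le_card_of_injOn (fun a => 1 - a)
    · intro a ha
      simp only [hNSdef, Finset.coe_filter, Finset.mem_filter, Finset.mem_univ, true_and, Set.mem_setOf_eq] at ha
      have ha1 : a ≠ 1 := fun e => ha (e ▸ IsSquare.one)
      have ha0 : a ≠ 0 := fun e => ha (e ▸ (by simpa using IsSquare.mul_self (0 : K)))
      simp only [hSQ1def, Finset.coe_filter, Finset.mem_filter, Finset.mem_univ, true_and, Set.mem_setOf_eq]
      exact ⟨h1 a ha, by intro e; apply ha1; linear_combination -e,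
        by intro e; apply ha0; linear_combination -e⟩
    · intro a _ b _ e
      simp only at e
      linear_combination -e
  have card2 : SQ0.card ≤ NS.card := by
    apply Finset.card_le_card_of_injOn (fun x => c * x)
    · intro x hx
      simp only [hSQ0def, Finset.coe_filter, Finset.mem_filter, Finset.mem_univ, true_and, Set.mem_setOf_eq] at hx
      obtain ⟨⟨z, hz⟩, hx0⟩ := hx
      simp only [hNSdef, Finset.coe_filter, Finset.mem_filter, Finset.mem_univ, true_and, Set.mem_setOf_eq]
      rintro ⟨y, hy⟩
      have hz0 : z ≠ 0 := by rintro rfl; simp at hz; exact hx0 hz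
      apply hc
      exact ⟨y * z⁻¹, by field_simp; linear_combination hy - c * hz⟩
    · intro a _ b _ e
      exact mul_left_cancel₀ hc0 e
  have card3 : SQ1.card < SQ0.card := by
    apply Finset.card_lt_card
    constructor
    · intro x hx
      simp only [hSQ1def, Finset.mem_filter, Finset.mem_univ, true_and] at hx
      simp only [hSQ0def, Finset.mem_filter, Finset.mem_univ, true_and]
      exact ⟨hx.1, hx.2.1⟩
    · intro hsub
      have h1m : (1 : K) ∈ SQ0 := by
        simp only [hSQ0def, Finset.mem_filter, Finset.mem_univ, true_and]
        exact ⟨IsSquare.one, one_ne_zero⟩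
      have := hsub h1m
      simp [hSQ1def] at this
  omega

set_option maxHeartbeats 2000000 in
lemma milnorRel_eq_top (K : Type*) [Field K] [Finite K] (q : ℕ) (hq : 2 ≤ q) :
    MilnorRel K q = ⊤ := by
  classical
  have : Fintype K := Fintype.ofFinite K
  have : Fintype Kˣ := Fintype.ofFinite Kˣ
  obtain ⟨g, hg⟩ := IsCyclic.exists_generator (α := Kˣ)
  set R := MilnorRel K q with hR
  set i0 : Fin q := ⟨0, by omega⟩ with hi0
  set i1 : Fin q := ⟨1, by omega⟩ with hi1
  have hne : i0 ≠ i1 := by simp [hi0, hi1, Fin.ext_iff]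
  set B : Fin q → Additive Kˣ := fun _ => Additive.ofMul g with hB
  set Φ : Additive Kˣ → Additive Kˣ → (⨂[ℤ] _ : Fin q, Additive Kˣ) :=
    fun x y => PiTensorProduct.tprod ℤ (update (update B i0 x) i1 y) with hΦ
  have hΦa : ∀ x y, Φ x y = PiTensorProduct.tprod ℤ (update (update B i0 x) i1 y) :=
    fun _ _ => rfl
  have hΦ' : ∀ x y, Φ x y = PiTensorProduct.tprod ℤ (update (update B i1 y) i0 x) := by
    intro x y
    rw [hΦa, update_comm hne]
  have haddr : ∀ x y y', Φ x (y + y') = Φ x y + Φ x y' := by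
    intro x y y'
    rw [hΦa x (y + y'), hΦa x y, hΦa x y']
    exact (PiTensorProduct.tprod ℤ).map_update_add (update B i0 x) i1 y y'
  have haddl : ∀ x x' y, Φ (x + x') y = Φ x y + Φ x' y := by
    intro x x' y
    rw [hΦ' (x + x') y, hΦ' x y, hΦ' x' y]
    exact (PiTensorProduct.tprod ℤ).map_update_add (update B i1 y) i0 x x'
  have hzl : ∀ y, Φ 0 y = 0 := by
    intro y
    rw [hΦ' 0 y]
    exact (PiTensorProduct.tprod ℤ).map_update_zero (update B i1 y) i0
  have hzr : ∀ x, Φ x 0 = 0 := by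
    intro x
    rw [hΦa x 0]
    exact (PiTensorProduct.tprod ℤ).map_update_zero (update B i0 x) i1
  set σ : Kˣ → Kˣ → (⨂[ℤ] _ : Fin q, Additive Kˣ) :=
    fun a b => Φ (Additive.ofMul a) (Additive.ofMul b) with hσ
  have hσa : ∀ a b, σ a b = Φ (Additive.ofMul a) (Additive.ofMul b) := fun _ _ => rfl
  have hmull : ∀ a a' b, σ (a * a') b = σ a b + σ a' b := by
    intro a a' b
    rw [hσa, hσa, hσa, ofMul_mul]
    exact haddl _ _ _
  have hmulr : ∀ a b b', σ a (b * b') = σ a b + σ a b' := by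
    intro a b b'
    rw [hσa, hσa, hσa, ofMul_mul]
    exact haddr _ _ _
  have h1l : ∀ b, σ 1 b = 0 := by
    intro b
    rw [hσa, ofMul_one]
    exact hzl _
  have h1r : ∀ a, σ a 1 = 0 := by
    intro a
    rw [hσa, ofMul_one]
    exact hzr _
  have hinvr : ∀ a b, σ a b⁻¹ = - σ a b := by
    intro a b
    have h := hmulr a b⁻¹ b
    rw [inv_mul_cancel, h1r] at h
    exact eq_neg_of_add_eq_zero_left h.symm
  have hinvl : ∀ a b, σ a⁻¹ b = - σ a b := by
    intro a b
    have h := hmull a⁻¹ a b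
    rw [inv_mul_cancel, h1l] at h
    exact eq_neg_of_add_eq_zero_left h.symm
  have hpowl : ∀ (n : ℕ) (a b : Kˣ), σ (a ^ n) b = (n : ℤ) • σ a b := by
    intro n a b
    induction n with
    | zero => simp [pow_zero, h1l]
    | succ n ih =>
      rw [pow_succ, hmull, ih]
      push_cast
      rw [add_smul, one_smul]
  have hpowr : ∀ (n : ℕ) (a b : Kˣ), σ a (b ^ n) = (n : ℤ) • σ a b := by
    intro n a b
    induction n with
    | zero => simp [pow_zero, h1r]
    | succ n ih =>
      rw [pow_succ, hmulr, ih]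
      push_cast
      rw [add_smul, one_smul]
  have hrel : ∀ a b : Kˣ, (a : K) + (b : K) = 1 → σ a b ∈ R := by
    intro a b hab
    apply Submodule.subset_span
    refine ⟨update (update (fun _ => g) i0 a) i1 b, ⟨i0, i1, hne, ?_⟩, ?_⟩
    · have e0 : update (update (fun _ => g) i0 a) i1 b i0 = a := by
        rw [update_of_ne hne, update_self]
      have e1 : update (update (fun _ => g) i0 a) i1 b i1 = b := update_self _ _ _
      rw [e0, e1]
      exact hab
    · rw [hσa, hΦa]
      congr 1
  have hma : ∀ a : Kˣ, σ a (-a) ∈ R := by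
    intro a
    by_cases ha : a = 1
    · subst ha
      rw [h1l]
      exact R.zero_mem
    · have ha0 : (a : K) ≠ 0 := a.ne_zero
      have ha1 : (a : K) ≠ 1 := fun e => ha (Units.val_eq_one.mp e)
      have hv : (1 : K) - (a : K) ≠ 0 := sub_ne_zero.mpr (Ne.symm ha1)
      have hw : (1 : K) - (a : K)⁻¹ ≠ 0 := by
        intro e
        have : (a : K)⁻¹ = 1 := by linear_combination -e
        exact ha1 (by field_simp at this; simp [this])
      set v : Kˣ := Units.mk0 _ hv with hvdef
      set w : Kˣ := Units.mk0 _ hw with hwdef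
      have hvw : -a = v * w⁻¹ := by
        refine Units.ext ?_
        rw [Units.val_mul]
        rw [hvdef, hwdef]
        simp only [Units.val_neg, Units.val_inv_eq_inv_val, Units.val_mk0]
        have hv' : (a : K) - 1 ≠ 0 := sub_ne_zero.mpr ha1
        field_simp
        ring
      have hcw : ((a⁻¹ : Kˣ) : K) + (w : K) = 1 := by
        rw [hwdef]
        simp [Units.val_inv_eq_inv_val]
      have hw2 : σ a w = - σ a⁻¹ w := by
        have h := hinvl a⁻¹ w
        rw [inv_inv] at h
        exact h
      have m1 : σ a v ∈ R := hrel a v (by rw [hvdef]; simp)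
      have m2 : σ a⁻¹ w ∈ R := hrel a⁻¹ w hcw
      rw [hvw, hmulr, hinvr, hw2, neg_neg]
      exact R.add_mem m1 m2
  have hsub : ∀ a : Kˣ, σ a a - σ a (-1) ∈ R := by
    intro a
    have h := hmulr a (-1) (-a)
    rw [show ((-1 : Kˣ) * (-a)) = a by simp] at h
    have h2 : σ a a - σ a (-1) = σ a (-a) := by rw [h]; abel
    rw [h2]
    exact hma a
  have h2tor : ∀ a : Kˣ, σ a (-1) + σ a (-1) = 0 := by
    intro a
    have h := hmulr a (-1) (-1)
    rw [show ((-1 : Kˣ) * (-1)) = 1 by simp, h1r] at h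
    exact h.symm
  have h2x : ∀ a : Kˣ, (2 : ℤ) • σ a a ∈ R := by
    intro a
    have he : (2 : ℤ) • σ a a
        = (2 : ℤ) • (σ a a - σ a (-1)) + (σ a (-1) + σ a (-1)) := by
      rw [two_smul, two_smul]
      abel
    rw [he, h2tor a, add_zero]
    exact R.smul_mem _ (hsub a)
  set n := Fintype.card Kˣ with hn
  have hnx : (n : ℤ) • σ g g = 0 := by
    rw [← hpowl, pow_card_eq_one, h1l]
  obtain ⟨m, hmodd, hmx⟩ : ∃ m : ℕ, Odd m ∧ (m : ℤ) • σ g g ∈ R := by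
    rcases Nat.even_or_odd n with hnev | hno
    · -- n even : counting argument
      have horder : orderOf g = n := by
        rw [orderOf_eq_card_of_forall_mem_zpowers hg, Nat.card_eq_fintype_card]
      have hn0 : 0 < n := Fintype.card_pos
      have hgns : ¬ IsSquare (g : K) := by
        rintro ⟨x, hx⟩
        have hx0 : x ≠ 0 := by
          rintro rfl
          simp only [mul_zero] at hx
          exact g.ne_zero hx
        have hgx : g = (Units.mk0 x hx0) ^ 2 := by
          refine Units.ext ?_
          rw [hx]
          simp [sq]
        have hpow : g ^ (n / 2) = 1 := by
          rw [hgx, ← pow_mul]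
          have h2n : 2 * (n / 2) = n := Nat.two_mul_div_two_of_even hnev
          rw [h2n, pow_card_eq_one]
        have hdvd := orderOf_dvd_of_pow_eq_one hpow
        rw [horder] at hdvd
        have hlt : n / 2 < n := Nat.div_lt_self hn0 one_lt_two
        have hz := Nat.eq_zero_of_dvd_of_lt hdvd hlt
        obtain ⟨r, hr⟩ := hnev
        omega
      obtain ⟨A, Bb, hA, hBb, hAB⟩ := exists_nonsquare_pair hgns
      have hA0 : A ≠ 0 := fun e => hA (e ▸ ⟨0, by simp⟩)
      have hB0 : Bb ≠ 0 := fun e => hBb (e ▸ ⟨0, by simp⟩)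
      set a : Kˣ := Units.mk0 A hA0 with hadef
      set b : Kˣ := Units.mk0 Bb hB0 with hbdef
      have hsa : ∃ s : ℕ, g ^ s = a := by
        have hmem := hg a
        rw [← mem_powers_iff_mem_zpowers] at hmem
        exact (Submonoid.mem_powers_iff _ _).mp hmem
      have hsb : ∃ t : ℕ, g ^ t = b := by
        have hmem := hg b
        rw [← mem_powers_iff_mem_zpowers] at hmem
        exact (Submonoid.mem_powers_iff _ _).mp hmem
      obtain ⟨s, hs⟩ := hsa
      obtain ⟨t, ht⟩ := hsb
      have hsodd : Odd s := by
        rcases Nat.even_or_odd s with ⟨u, hu⟩ | h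
        · exfalso
          apply hA
          refine ⟨((g ^ u : Kˣ) : K), ?_⟩
          have : A = ((g ^ s : Kˣ) : K) := by rw [hs, hadef]; rfl
          rw [this, hu]
          push_cast [pow_add]
          ring
        · exact h
      have htodd : Odd t := by
        rcases Nat.even_or_odd t with ⟨u, hu⟩ | h
        · exfalso
          apply hBb
          refine ⟨((g ^ u : Kˣ) : K), ?_⟩
          have : Bb = ((g ^ t : Kˣ) : K) := by rw [ht, hbdef]; rfl
          rw [this, hu]
          push_cast [pow_add]
          ring
        · exact h
      refine ⟨s * t, hsodd.mul htodd, ?_⟩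
      have hab : σ a b ∈ R := hrel a b (by rw [hadef, hbdef]; simpa using hAB)
      rw [← hs, ← ht] at hab
      rw [hpowl, hpowr, smul_smul] at hab
      have : ((s * t : ℕ) : ℤ) = (s : ℤ) * (t : ℤ) := by push_cast; ring
      rw [this]
      exact hab
    · exact ⟨n, hno, by rw [hnx]; exact R.zero_mem⟩
  have hgg : σ g g ∈ R := by
    obtain ⟨k, hk⟩ := hmodd
    have huv : (2 : ℤ) * (-(k : ℤ)) + (m : ℤ) * 1 = 1 := by
      push_cast [hk]
      ring
    have he : σ g g = (-(k : ℤ)) • ((2 : ℤ) • σ g g) + (1 : ℤ) • ((m : ℤ) • σ g g) := by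
      rw [smul_smul, smul_smul, ← add_smul]
      rw [show (-(k : ℤ)) * 2 + 1 * (m : ℤ) = 1 by linarith [huv]]
      rw [one_smul]
    rw [he]
    exact R.add_mem (R.smul_mem _ (h2x g)) (R.smul_mem _ hmx)
  rw [Submodule.eq_top_iff']
  intro t
  have hspan : t ∈ Submodule.span ℤ (Set.range (PiTensorProduct.tprod ℤ)) := by
    rw [PiTensorProduct.span_tprod_eq_top]
    trivial
  refine Submodule.span_induction ?_ R.zero_mem (fun x y _ _ hx hy => R.add_mem hx hy)
    (fun c x _ hx => R.smul_mem c hx) hspan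
  rintro x ⟨f, rfl⟩
  have hk : ∀ i, ∃ k : ℤ, f i = k • Additive.ofMul g := by
    intro i
    obtain ⟨k, hk⟩ := Subgroup.mem_zpowers_iff.mp (hg (Additive.toMul (f i)))
    exact ⟨k, by rw [← ofMul_zpow, hk, ofMul_toMul]⟩
  choose k hkk using hk
  have hsmul : PiTensorProduct.tprod ℤ f = (∏ i, k i) • PiTensorProduct.tprod ℤ B := by
    rw [← MultilinearMap.map_smul_univ]
    congr 1
    funext i
    rw [hkk i]
  rw [hsmul]
  apply R.smul_mem
  have e1 : update B i0 (Additive.ofMul g) = B := by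
    funext j
    by_cases h : j = i0 <;> simp [h, hB]
  have e2 : update B i1 (Additive.ofMul g) = B := by
    funext j
    by_cases h : j = i1 <;> simp [h, hB]
  have hBσ : PiTensorProduct.tprod ℤ B = σ g g := by
    rw [hσa, hΦa, e1, e2]
  rw [hBσ]
  exact hgg

end Aux

/-- For a finite field `K`, the Milnor K-group `K_q(K)` vanishes for all `q ≥ 2`; in
particular every Steinberg symbol `{a, b}` in `K_2(K)` is trivial. -/
theorem milnorK_finite_field_vanish (K : Type*) [Field K] [Finite K] :
    (∀ q : ℕ, 2 ≤ q → Subsingleton (MilnorK K q)) ∧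
      ∀ a b : Kˣ,
        (Submodule.Quotient.mk
            (PiTensorProduct.tprod ℤ ![Additive.ofMul a, Additive.ofMul b]) :
          MilnorK K 2) = 0 := by
  constructor
  · intro q hq
    exact Submodule.Quotient.subsingleton_iff.mpr (milnorRel_eq_top K q hq)
  · intro a b
    refine (Submodule.Quotient.mk_eq_zero _).mpr ?_
    rw [milnorRel_eq_top K 2 (le_refl 2)]
    trivial
end

section
/- Let A be a ring, π ∈ A a nonzero element such that A is π-adically complete and separated (A ≅ lim A/π^n A), and suppose R = A/πA is an integral domain and π is a nonzero divisor of A. Let B = A[π^{-1}]. Then every unit of B can be written uniquely as u·π^n with u ∈ A^× and n ∈ ℤ; that is, B^× ≅ A^× × ℤ. -/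
private lemma key_factor (A : Type*) [CommRing A] (π : A) (hreg : π ∈ nonZeroDivisors A)
    [IsDomain (A ⧸ Ideal.span {π})] :
    ∀ (N : ℕ) (a a' : A), a * a' = π ^ N → ∃ (u : Aˣ) (m : ℕ), a = (u : A) * π ^ m := by
  intro N
  induction N with
  | zero =>
    intro a a' h
    exact ⟨(IsUnit.of_mul_eq_one a' (by simpa using h)).unit, 0, by simp⟩
  | succ N ih =>
    intro a a' h
    have hπ0 : (Ideal.Quotient.mk (Ideal.span {π}) π) = 0 := by
      rw [Ideal.Quotient.eq_zero_iff_mem]; exact Ideal.mem_span_singleton_self π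
    have hdvd : π ∣ a ∨ π ∣ a' := by
      have h0 : (Ideal.Quotient.mk (Ideal.span {π}) a) *
          (Ideal.Quotient.mk (Ideal.span {π}) a') = 0 := by
        rw [← map_mul, h, map_pow, hπ0]
        simp [pow_succ]
      rcases mul_eq_zero.1 h0 with h1 | h1
      · exact Or.inl (Ideal.mem_span_singleton.1 (Ideal.Quotient.eq_zero_iff_mem.1 h1))
      · exact Or.inr (Ideal.mem_span_singleton.1 (Ideal.Quotient.eq_zero_iff_mem.1 h1))
    rcases hdvd with ⟨c, rfl⟩ | ⟨c, rfl⟩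
    · have h3 : (c * a' - π ^ N) * π = 0 := by linear_combination h
      have h2 : c * a' = π ^ N := sub_eq_zero.1 (hreg.2 _ h3)
      obtain ⟨u, m, hm⟩ := ih c a' h2
      exact ⟨u, m + 1, by rw [hm]; ring⟩
    · have h3 : (a * c - π ^ N) * π = 0 := by linear_combination h
      have h2 : a * c = π ^ N := sub_eq_zero.1 (hreg.2 _ h3)
      exact ih a c h2

/-- Let `A` be a ring, `π ∈ A` a regular element such that `A` is `π`-adically complete and
separated, and suppose `R = A/πA` is an integral domain.  Let `B = A[π⁻¹]`.  Then every
unit of `B` is uniquely of the form `u·πⁿ` with `u ∈ A^×` and `n ∈ ℤ`;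
that is, `B^× ≅ A^× × ℤ`. -/
theorem units_of_pi_inverted_ring
    (A : Type*) [CommRing A] (π : A) (hreg : π ∈ nonZeroDivisors A)
    [IsAdicComplete (Ideal.span {π}) A]
    [IsDomain (A ⧸ Ideal.span {π})]
    (πB : (Localization.Away π)ˣ) (hπB : (πB : Localization.Away π) = algebraMap A _ π) :
    ∀ b : (Localization.Away π)ˣ,
      ∃! un : Aˣ × ℤ,
        b = Units.map (algebraMap A (Localization.Away π) : A →* _) un.1 * πB ^ un.2 := by
  classical
  set B := Localization.Away π with hB
  set φ : A →* B := RingHom.toMonoidHom (algebraMap A B) with hφ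
  have hinj : Function.Injective (algebraMap A B) :=
    IsLocalization.injective _ (Submonoid.powers_le.2 hreg)
  have hπnu : ¬ IsUnit π := by
    intro h
    have htop : Ideal.span {π} = ⊤ := Ideal.span_singleton_eq_top.2 h
    exact (not_subsingleton (A ⧸ Ideal.span {π}))
      (Ideal.Quotient.subsingleton_iff.2 htop)
  -- natural-number version of the rigidity lemma
  have hnat : ∀ (n : ℕ) (v u : Aˣ), (v : A) * π ^ n = u → n = 0 ∧ v = u := by
    intro n v u h
    have hπn : π ^ n = (↑(v⁻¹ * u) : A) := by
      have hv : (↑(v⁻¹:Aˣ) : A) * ↑v = 1 := by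
        rw [← Units.val_mul, inv_mul_cancel, Units.val_one]
      rw [Units.val_mul]
      linear_combination (↑(v⁻¹:Aˣ) : A) * h - π ^ n * hv
    have hu : IsUnit (π ^ n) := hπn ▸ (v⁻¹ * u).isUnit
    have hn : n = 0 := by
      by_contra hne
      exact hπnu ((isUnit_pow_iff hne).1 hu)
    subst hn
    refine ⟨rfl, Units.ext ?_⟩
    simpa using h
  -- πB^k coerces to φ (π^k)
  have hπBpow : ∀ k : ℕ, ((πB ^ k : Bˣ) : B) = algebraMap A B (π ^ k) := by
    intro k
    rw [Units.val_pow_eq_pow_val, hπB, map_pow]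
  -- integer version of the rigidity lemma
  have hkey : ∀ (e : ℤ) (v u : Aˣ),
      Units.map φ v * πB ^ e = Units.map φ u → e = 0 ∧ v = u := by
    intro e v u h
    rcases le_or_gt 0 e with he | he
    · lift e to ℕ using he
      rw [zpow_natCast] at h
      have hA : (v : A) * π ^ e = u := by
        apply hinj
        have := congrArg (Units.val) h
        rw [Units.val_mul, hπBpow] at this
        simpa [φ, map_mul] using this
      obtain ⟨h1, h2⟩ := hnat e v u hA
      exact ⟨by exact_mod_cast h1, h2⟩
    · exfalso
      have h' : Units.map φ u * πB ^ (-e) = Units.map φ v := by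
        rw [← h]; group
      obtain ⟨n, hn⟩ : ∃ n : ℕ, (-e) = (n : ℤ) :=
        ⟨(-e).toNat, (Int.toNat_of_nonneg (by omega)).symm⟩
      rw [hn, zpow_natCast] at h'
      have hA : (u : A) * π ^ n = v := by
        apply hinj
        have := congrArg (Units.val) h'
        rw [Units.val_mul, hπBpow] at this
        simpa [φ, map_mul] using this
      have := (hnat n u v hA).1
      omega
  intro b
  obtain ⟨⟨a, s⟩, hb⟩ := IsLocalization.surj (Submonoid.powers π) (b : B)
  obtain ⟨k, hk⟩ := s.2
  replace hk : π ^ k = (s : A) := hk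
  dsimp only at hb
  obtain ⟨⟨a', s'⟩, hb'⟩ := IsLocalization.surj (Submonoid.powers π) ((b⁻¹ : Bˣ) : B)
  obtain ⟨k', hk'⟩ := s'.2
  replace hk' : π ^ k' = (s' : A) := hk'
  dsimp only at hb'
  have haa' : a * a' = π ^ (k + k') := by
    apply hinj
    rw [map_mul, ← hb, ← hb']
    have hbb : (b : B) * ((b⁻¹ : Bˣ) : B) = 1 := by
      rw [← Units.val_mul, mul_inv_cancel, Units.val_one]
    calc ((b : B) * algebraMap A B (s : A)) * (((b⁻¹ : Bˣ) : B) * algebraMap A B (s' : A))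
        = ((b : B) * ((b⁻¹ : Bˣ) : B)) * (algebraMap A B (s : A) * algebraMap A B (s' : A)) := by
          ring
      _ = algebraMap A B (π ^ (k + k')) := by
          rw [hbb, one_mul, ← map_mul, ← hk, ← hk', pow_add]
  obtain ⟨u, m, hm⟩ := key_factor A π hreg (k + k') a a' haa'
  have hstep : b * πB ^ (k : ℤ) = Units.map φ u * πB ^ (m : ℤ) := by
    rw [zpow_natCast, zpow_natCast]
    apply Units.ext
    rw [Units.val_mul, Units.val_mul, hπBpow, hπBpow]
    show (b : B) * algebraMap A B (π ^ k) = φ u * algebraMap A B (π ^ m)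
    rw [hk, hb, hm]
    simp [φ, map_mul]; rfl
  have hexist : b = Units.map φ u * πB ^ ((m : ℤ) - k) := by
    apply mul_right_cancel (b := πB ^ (k : ℤ))
    rw [hstep, mul_assoc, ← zpow_add, sub_add_cancel]
  refine ⟨(u, (m : ℤ) - k), hexist, ?_⟩
  rintro ⟨v, n⟩ hvn
  have hcomb : Units.map φ v * πB ^ (n - ((m : ℤ) - k)) = Units.map φ u := by
    have hvn' : b = Units.map φ v * πB ^ n := hvn
    have : Units.map φ v * πB ^ n = Units.map φ u * πB ^ ((m : ℤ) - k) := by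
      rw [← hvn', ← hexist]
    calc Units.map φ v * πB ^ (n - ((m : ℤ) - k))
        = (Units.map φ v * πB ^ n) * (πB ^ ((m : ℤ) - k))⁻¹ := by
          rw [mul_assoc, ← zpow_neg, ← zpow_add]; ring_nf
      _ = Units.map φ u := by rw [this, mul_assoc, ← zpow_neg, ← zpow_add]; simp
  obtain ⟨h1, h2⟩ := hkey _ v u hcomb
  simp only [Prod.mk.injEq]
  exact ⟨h2, by omega⟩
end

section
/- Let K be a complete discretely valued field with residue field k, π a uniformizer of K. There exists a unique group homomorphism ∂ : K_2(K) → k^× (the tame symbol) satisfying ∂({u, π}) = ū and ∂({u, v}) = 1 for all units u, v ∈ O_K^×, where ū denotes the residue of u. -/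
open scoped TensorProduct
open IsLocalRing

/-- The Steinberg relations: the subgroup of `K^× ⊗ K^×` generated by the tensors
`x ⊗ (1 - x)`. -/
def SteinbergRel (K : Type*) [Field K] :
    Submodule ℤ (Additive Kˣ ⊗[ℤ] Additive Kˣ) :=
  Submodule.span ℤ
    {t | ∃ x y : Kˣ, (x : K) + (y : K) = 1 ∧
      t = Additive.ofMul x ⊗ₜ[ℤ] Additive.ofMul y}

/-- The second Milnor K-group `K₂(K)`. -/
abbrev MilnorK2 (K : Type*) [Field K] :=
  (Additive Kˣ ⊗[ℤ] Additive Kˣ) ⧸ SteinbergRel K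

/-- The Steinberg symbol `{x, y}` in `K₂(K)`. -/
noncomputable def milnorSymbol {K : Type*} [Field K] (x y : Kˣ) : MilnorK2 K :=
  Submodule.Quotient.mk (Additive.ofMul x ⊗ₜ[ℤ] Additive.ofMul y)

/-! ### Auxiliary lemmas about `milnorSymbol` (valid over any field). -/

section MilnorLemmas

variable {K : Type*} [Field K]

theorem milnorSymbol_mul_left (x x' y : Kˣ) :
    milnorSymbol (x * x') y = milnorSymbol x y + milnorSymbol x' y := by
  simp only [milnorSymbol, ofMul_mul, TensorProduct.add_tmul, Submodule.Quotient.mk_add]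

theorem milnorSymbol_mul_right (x y y' : Kˣ) :
    milnorSymbol x (y * y') = milnorSymbol x y + milnorSymbol x y' := by
  simp only [milnorSymbol, ofMul_mul, TensorProduct.tmul_add, Submodule.Quotient.mk_add]

theorem milnorSymbol_one_left (y : Kˣ) : milnorSymbol (1 : Kˣ) y = 0 := by
  simp [milnorSymbol, TensorProduct.zero_tmul, Submodule.Quotient.mk_eq_zero,
    show Additive.ofMul (1 : Kˣ) = 0 from rfl]

theorem milnorSymbol_one_right (x : Kˣ) : milnorSymbol x (1 : Kˣ) = 0 := by
  simp [milnorSymbol, TensorProduct.tmul_zero, Submodule.Quotient.mk_eq_zero,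
    show Additive.ofMul (1 : Kˣ) = 0 from rfl]

theorem milnorSymbol_inv_left (x y : Kˣ) : milnorSymbol x⁻¹ y = -milnorSymbol x y := by
  have h := milnorSymbol_mul_left x⁻¹ x y
  rw [inv_mul_cancel, milnorSymbol_one_left] at h
  exact eq_neg_of_add_eq_zero_left h.symm

theorem milnorSymbol_inv_right (x y : Kˣ) : milnorSymbol x y⁻¹ = -milnorSymbol x y := by
  have h := milnorSymbol_mul_right x y⁻¹ y
  rw [inv_mul_cancel, milnorSymbol_one_right] at h
  exact eq_neg_of_add_eq_zero_left h.symm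

theorem milnorSymbol_pow_left (x y : Kˣ) (n : ℕ) :
    milnorSymbol (x ^ n) y = n • milnorSymbol x y := by
  induction n with
  | zero => simpa using milnorSymbol_one_left y
  | succ n ih => rw [pow_succ, milnorSymbol_mul_left, ih, succ_nsmul]

theorem milnorSymbol_pow_right (x y : Kˣ) (n : ℕ) :
    milnorSymbol x (y ^ n) = n • milnorSymbol x y := by
  induction n with
  | zero => simpa using milnorSymbol_one_right x
  | succ n ih => rw [pow_succ, milnorSymbol_mul_right, ih, succ_nsmul]

theorem milnorSymbol_zpow_left (x y : Kˣ) (n : ℤ) :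
    milnorSymbol (x ^ n) y = n • milnorSymbol x y := by
  cases n with
  | ofNat n =>
      rw [Int.ofNat_eq_coe, zpow_natCast, milnorSymbol_pow_left, natCast_zsmul]
  | negSucc n =>
      rw [zpow_negSucc, milnorSymbol_inv_left, milnorSymbol_pow_left, negSucc_zsmul]

theorem milnorSymbol_zpow_right (x y : Kˣ) (n : ℤ) :
    milnorSymbol x (y ^ n) = n • milnorSymbol x y := by
  cases n with
  | ofNat n =>
      rw [Int.ofNat_eq_coe, zpow_natCast, milnorSymbol_pow_right, natCast_zsmul]
  | negSucc n =>
      rw [zpow_negSucc, milnorSymbol_inv_right, milnorSymbol_pow_right, negSucc_zsmul]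

theorem milnorSymbol_steinberg {x y : Kˣ} (h : (x : K) + (y : K) = 1) :
    milnorSymbol x y = 0 := by
  rw [milnorSymbol, Submodule.Quotient.mk_eq_zero]
  exact Submodule.subset_span ⟨x, y, h, rfl⟩

theorem milnorSymbol_neg_self (x : Kˣ) : milnorSymbol x (-x) = 0 := by
  by_cases hx : x = 1
  · subst hx; exact milnorSymbol_one_left _
  · have hx0 : (x : K) ≠ 0 := x.ne_zero
    have hx1 : (1 : K) - (x : K) ≠ 0 := by
      intro h
      apply hx
      apply Units.ext
      rw [Units.val_one]
      linear_combination -h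
    have hxinv : (1 : K) - ((x⁻¹ : Kˣ) : K) ≠ 0 := by
      rw [Units.val_inv_eq_inv_val]
      intro h
      apply hx
      apply Units.ext
      rw [Units.val_one]
      have hinv : (x : K)⁻¹ = 1 := by linear_combination -h
      exact inv_eq_one.mp hinv
    set a : Kˣ := Units.mk0 _ hx1 with ha
    set b : Kˣ := Units.mk0 _ hxinv with hb
    have h1 : milnorSymbol x a = 0 :=
      milnorSymbol_steinberg (by simp [ha])
    have h2 : milnorSymbol x⁻¹ b = 0 :=
      milnorSymbol_steinberg (by simp [hb])
    have hab : -x = a * b⁻¹ := by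
      apply Units.ext
      rw [Units.val_mul, Units.val_inv_eq_inv_val, Units.val_neg]
      have hav : (a : K) = 1 - (x : K) := rfl
      have hbv : (b : K) = 1 - ((x⁻¹ : Kˣ) : K) := rfl
      rw [hav, hbv, Units.val_inv_eq_inv_val]
      have hx1' : (1 : K) - (x : K)⁻¹ ≠ 0 := by
        rw [← Units.val_inv_eq_inv_val]; exact hxinv
      have hne : (-1 : K) + (x : K) ≠ 0 := by
        intro h; apply hx1; linear_combination -h
      field_simp
      rw [eq_div_iff (show (x : K) - 1 ≠ 0 by intro h; apply hne; linear_combination h)]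
      ring
    have hxb : milnorSymbol x b = 0 := by
      have h3 := milnorSymbol_inv_left x b
      rw [h2] at h3
      simpa using h3.symm
    rw [hab, milnorSymbol_mul_right, milnorSymbol_inv_right, h1, hxb]
    simp

theorem milnorSymbol_anticomm (x y : Kˣ) :
    milnorSymbol y x = -milnorSymbol x y := by
  have key : milnorSymbol (x * y) (-(x * y)) = 0 := milnorSymbol_neg_self _
  rw [milnorSymbol_mul_left] at key
  have h1 : milnorSymbol x (-(x * y)) = milnorSymbol x y := by
    rw [show -(x * y) = (-x) * y from (neg_mul x y).symm, milnorSymbol_mul_right,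
      milnorSymbol_neg_self, zero_add]
  have h2 : milnorSymbol y (-(x * y)) = milnorSymbol y x := by
    rw [show -(x * y) = x * (-y) from (mul_neg x y).symm, milnorSymbol_mul_right,
      milnorSymbol_neg_self, add_zero]
  rw [h1, h2] at key
  exact eq_neg_of_add_eq_zero_right key

end MilnorLemmas

section TameAux

variable {O K : Type*} [CommRing O] [IsDomain O] [IsDiscreteValuationRing O]
  [Field K] [Algebra O K] [IsFractionRing O K]

/-- The canonical map `Oˣ →* Kˣ`. -/
noncomputable def uKmap (O K : Type*) [CommRing O] [Field K] [Algebra O K] : Oˣ →* Kˣ :=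
  Units.map (algebraMap O K).toMonoidHom

/-- The image of `π` in `Kˣ`. -/
noncomputable def piU (π : O) (hπ : Irreducible π) : Kˣ :=
  Units.mk0 (algebraMap O K π)
    ((map_ne_zero_iff _ (IsFractionRing.injective O K)).mpr hπ.ne_zero)

variable (π : O) (hπ : Irreducible π)

theorem piU_val : ((piU (K := K) π hπ : Kˣ) : K) = algebraMap O K π := rfl

theorem uKmap_val (u : Oˣ) : ((uKmap O K u : Kˣ) : K) = algebraMap O K (u : O) := rfl

theorem exists_dec (x : Kˣ) :
    ∃ p : Oˣ × ℤ, x = uKmap O K p.1 * piU (K := K) π hπ ^ p.2 := by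
  have hπ0 : algebraMap O K π ≠ 0 :=
    (map_ne_zero_iff _ (IsFractionRing.injective O K)).mpr hπ.ne_zero
  obtain ⟨a, b, hb, hab⟩ := IsFractionRing.div_surjective (A := O) (x : K)
  have hb0 : b ≠ 0 := nonZeroDivisors.ne_zero hb
  have ha0 : a ≠ 0 := by
    intro h
    apply x.ne_zero
    rw [← hab, h, map_zero, zero_div]
  obtain ⟨m, u, hu⟩ := IsDiscreteValuationRing.eq_unit_mul_pow_irreducible ha0 hπ
  obtain ⟨l, w, hw⟩ := IsDiscreteValuationRing.eq_unit_mul_pow_irreducible hb0 hπ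
  have hw0 : algebraMap O K (w : O) ≠ 0 :=
    (map_ne_zero_iff _ (IsFractionRing.injective O K)).mpr w.ne_zero
  refine ⟨(u * w⁻¹, (m : ℤ) - (l : ℤ)), ?_⟩
  apply Units.ext
  show (x : K) = ((uKmap O K (u * w⁻¹) * piU (K := K) π hπ ^ ((m : ℤ) - (l : ℤ)) : Kˣ) : K)
  rw [map_mul, map_inv, Units.val_mul, Units.val_mul, Units.val_inv_eq_inv_val,
    Units.val_zpow_eq_zpow_val, piU_val, uKmap_val, uKmap_val]
  rw [← hab, hu, hw, map_mul, map_mul, map_pow, map_pow]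
  rw [zpow_sub₀ hπ0, zpow_natCast, zpow_natCast]
  field_simp

theorem dec_unique {u u' : Oˣ} {n n' : ℤ}
    (h : uKmap O K u * piU (K := K) π hπ ^ n = uKmap O K u' * piU (K := K) π hπ ^ n') :
    u = u' ∧ n = n' := by
  wlog hle : n' ≤ n with H
  · exact (H π hπ h.symm (le_of_not_ge hle)).imp Eq.symm Eq.symm
  set k : ℕ := (n - n').toNat with hk
  have hnk : n = n' + (k : ℤ) := by omega
  have h2 : uKmap O K u * piU (K := K) π hπ ^ (k : ℤ) = uKmap O K u' := by
    apply mul_right_cancel (b := piU (K := K) π hπ ^ n')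
    calc uKmap O K u * piU (K := K) π hπ ^ (k : ℤ) * piU (K := K) π hπ ^ n'
        = uKmap O K u * piU (K := K) π hπ ^ n := by
          rw [mul_assoc, ← zpow_add, hnk, add_comm]
      _ = uKmap O K u' * piU (K := K) π hπ ^ n' := h
  have h3 : algebraMap O K ((u : O) * π ^ k) = algebraMap O K (u' : O) := by
    have := congrArg (Units.val) h2
    rw [Units.val_mul, Units.val_zpow_eq_zpow_val, piU_val, uKmap_val, uKmap_val,
      zpow_natCast, ← map_pow, ← map_mul] at this
    exact this
  have h4 : (u : O) * π ^ k = (u' : O) := IsFractionRing.injective O K h3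
  have h5 : IsUnit (π ^ k) := isUnit_of_mul_isUnit_right (h4 ▸ u'.isUnit)
  have hk0 : k = 0 := by
    by_contra hk0
    exact hπ.not_isUnit (isUnit_of_dvd_unit (dvd_pow_self π hk0) h5)
  have hnn : n = n' := by omega
  refine ⟨?_, hnn⟩
  apply Units.ext
  have := h4
  rw [hk0, pow_zero, mul_one] at this
  exact this

/-- The unit part of the decomposition `x = u π^n`. -/
noncomputable def decU (x : Kˣ) : Oˣ := (exists_dec (K := K) π hπ x).choose.1

/-- The valuation part of the decomposition `x = u π^n`. -/
noncomputable def decV (x : Kˣ) : ℤ := (exists_dec (K := K) π hπ x).choose.2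

theorem dec_spec (x : Kˣ) :
    x = uKmap O K (decU π hπ x) * piU (K := K) π hπ ^ decV π hπ x :=
  (exists_dec (K := K) π hπ x).choose_spec

theorem dec_eq {x : Kˣ} {u : Oˣ} {n : ℤ}
    (h : x = uKmap O K u * piU (K := K) π hπ ^ n) :
    decU π hπ x = u ∧ decV π hπ x = n :=
  dec_unique π hπ ((dec_spec π hπ x).symm.trans h)

theorem dec_mul (x y : Kˣ) :
    decU π hπ (x * y) = decU π hπ x * decU π hπ y ∧
      decV π hπ (x * y) = decV π hπ x + decV π hπ y := by
  apply dec_eq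
  calc x * y = (uKmap O K (decU π hπ x) * piU (K := K) π hπ ^ decV π hπ x) *
        (uKmap O K (decU π hπ y) * piU (K := K) π hπ ^ decV π hπ y) := by
        rw [← dec_spec, ← dec_spec]
    _ = uKmap O K (decU π hπ x * decU π hπ y) *
        piU (K := K) π hπ ^ (decV π hπ x + decV π hπ y) := by
        rw [map_mul, zpow_add, mul_mul_mul_comm]

theorem dec_zpow (x : Kˣ) (r : ℤ) :
    decU π hπ (x ^ r) = decU π hπ x ^ r ∧ decV π hπ (x ^ r) = r * decV π hπ x := by
  apply dec_eq
  calc x ^ r = (uKmap O K (decU π hπ x) * piU (K := K) π hπ ^ decV π hπ x) ^ r := by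
        rw [← dec_spec]
    _ = uKmap O K (decU π hπ x ^ r) * piU (K := K) π hπ ^ (r * decV π hπ x) := by
        rw [mul_zpow, map_zpow, ← zpow_mul, mul_comm (decV π hπ x) r]

theorem dec_unit (u : Oˣ) :
    decU π hπ (uKmap O K u) = u ∧ decV π hπ (uKmap O K u) = 0 :=
  dec_eq π hπ (by rw [zpow_zero, mul_one])

theorem dec_piU :
    decU π hπ (piU (K := K) π hπ) = 1 ∧ decV π hπ (piU (K := K) π hπ) = 1 :=
  dec_eq π hπ (by rw [map_one, one_mul, zpow_one])

/-- Residue of a unit. -/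
noncomputable def RUmap (O : Type*) [CommRing O] [IsLocalRing O] :
    Oˣ →* (ResidueField O)ˣ :=
  Units.map (residue O).toMonoidHom

/-- The tame symbol as a function of two units of `K`. -/
noncomputable def tameB (x y : Kˣ) : Additive (ResidueField O)ˣ :=
  (decV π hπ x * decV π hπ y) • Additive.ofMul (-1 : (ResidueField O)ˣ) +
    decV π hπ y • Additive.ofMul (RUmap O (decU π hπ x)) +
    (-decV π hπ x) • Additive.ofMul (RUmap O (decU π hπ y))

theorem tameB_add_left (x x' y : Kˣ) :
    tameB π hπ (x * x') y = tameB (K := K) π hπ x y + tameB π hπ x' y := by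
  obtain ⟨hU, hV⟩ := dec_mul π hπ x x'
  rw [tameB, tameB, tameB, hU, hV, map_mul, ofMul_mul]
  module

theorem tameB_add_right (x y y' : Kˣ) :
    tameB π hπ x (y * y') = tameB (K := K) π hπ x y + tameB π hπ x y' := by
  obtain ⟨hU, hV⟩ := dec_mul π hπ y y'
  rw [tameB, tameB, tameB, hU, hV, map_mul, ofMul_mul]
  module

theorem tameB_zpow_left (x y : Kˣ) (r : ℤ) :
    tameB π hπ (x ^ r) y = r • tameB (K := K) π hπ x y := by
  obtain ⟨hU, hV⟩ := dec_zpow π hπ x r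
  rw [tameB, tameB, hU, hV, map_zpow, ofMul_zpow]
  module

theorem tameB_zpow_right (x y : Kˣ) (r : ℤ) :
    tameB π hπ x (y ^ r) = r • tameB (K := K) π hπ x y := by
  obtain ⟨hU, hV⟩ := dec_zpow π hπ y r
  rw [tameB, tameB, hU, hV, map_zpow, ofMul_zpow]
  module

end TameAux

section TameAux2

variable {O K : Type*} [CommRing O] [IsDomain O] [IsDiscreteValuationRing O]
  [Field K] [Algebra O K] [IsFractionRing O K] (π : O) (hπ : Irreducible π)

theorem dec_spec_val (x : Kˣ) :
    (x : K) = algebraMap O K ((decU π hπ x : Oˣ) : O) *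
      (algebraMap O K π) ^ (decV π hπ x) := by
  conv_lhs => rw [dec_spec π hπ x]
  rw [Units.val_mul, Units.val_zpow_eq_zpow_val, piU_val, uKmap_val]

include hπ in
theorem pi_residue : residue O π = 0 :=
  (IsLocalRing.residue_eq_zero_iff π).mpr
    ((IsLocalRing.mem_maximalIdeal π).mpr (mem_nonunits_iff.mpr hπ.not_isUnit))

theorem tameB_steinberg {x y : Kˣ} (h : (x : K) + (y : K) = 1) :
    tameB (K := K) π hπ x y = 0 := by
  have hinj := IsFractionRing.injective O K
  have hπ0 : algebraMap O K π ≠ 0 := (map_ne_zero_iff _ hinj).mpr hπ.ne_zero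
  have hπres : residue O π = 0 := pi_residue π hπ
  rcases lt_trichotomy (decV π hπ x) 0 with ha | ha | ha
  · -- negative valuation
    set a : ℤ := decV π hπ x with haa
    set n : ℕ := (-a).toNat with hn
    have hna : (n : ℤ) = -a := by omega
    set c : O := π ^ n - ((decU π hπ x : Oˣ) : O) with hc
    have hresc : residue O c = -residue O ((decU π hπ x : Oˣ) : O) := by
      rw [hc, map_sub, map_pow, hπres, zero_pow (by omega), zero_sub]
    have hru : residue O ((decU π hπ x : Oˣ) : O) ≠ 0 :=
      ((decU π hπ x).isUnit.map (residue O)).ne_zero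
    have hcu : IsUnit c := by
      by_contra hcu
      have h0 : residue O c = 0 :=
        (IsLocalRing.residue_eq_zero_iff c).mpr
          ((IsLocalRing.mem_maximalIdeal c).mpr (mem_nonunits_iff.mpr hcu))
      rw [hresc, neg_eq_zero] at h0
      exact hru h0
    have hy : y = uKmap O K hcu.unit * piU (K := K) π hπ ^ a := by
      apply Units.ext
      rw [Units.val_mul, Units.val_zpow_eq_zpow_val, piU_val, uKmap_val, hcu.unit_spec]
      have hyv : (y : K) = 1 - (x : K) := by linear_combination h
      rw [hyv, dec_spec_val π hπ x, hc, map_sub, map_pow, sub_mul, ← haa]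
      have hone : (algebraMap O K π) ^ (n : ℕ) * (algebraMap O K π) ^ a = 1 := by
        rw [← zpow_natCast, ← zpow_add₀ hπ0, (by omega : (n : ℤ) + a = 0), zpow_zero]
      linear_combination -hone
    obtain ⟨hUy, hVy⟩ := dec_eq π hπ hy
    have hruy : RUmap O hcu.unit = -(RUmap O (decU π hπ x)) := by
      apply Units.ext
      rw [Units.val_neg]
      show residue O (hcu.unit : O) = -residue O ((decU π hπ x : Oˣ) : O)
      rw [hcu.unit_spec]
      exact hresc
    rw [tameB, hUy, hVy, hruy, ← haa]
    have hsplit : Additive.ofMul (-(RUmap O (decU π hπ x)))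
        = Additive.ofMul (-1 : (ResidueField O)ˣ)
          + Additive.ofMul (RUmap O (decU π hπ x)) := by
      rw [← ofMul_mul, neg_one_mul]
    rw [hsplit]
    have hmod : (a * a) • Additive.ofMul (-1 : (ResidueField O)ˣ)
        + a • Additive.ofMul (RUmap O (decU π hπ x))
        + (-a) • (Additive.ofMul (-1 : (ResidueField O)ˣ)
            + Additive.ofMul (RUmap O (decU π hπ x)))
        = ((a - 1) * ((a - 1) + 1)) • Additive.ofMul (-1 : (ResidueField O)ˣ) := by
      module
    rw [hmod, ← ofMul_zpow, Even.neg_one_zpow (Int.even_mul_succ_self _), ofMul_one]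
  · -- zero valuation
    have hx : (x : K) = algebraMap O K ((decU π hπ x : Oˣ) : O) := by
      rw [dec_spec_val π hπ x, ha, zpow_zero, mul_one]
    set c : O := 1 - ((decU π hπ x : Oˣ) : O) with hc
    have hyc : (y : K) = algebraMap O K c := by
      rw [hc, map_sub, map_one, ← hx]
      linear_combination h
    have hc0 : c ≠ 0 := by
      intro h0
      apply y.ne_zero
      rw [hyc, h0, map_zero]
    obtain ⟨m, w, hw⟩ := IsDiscreteValuationRing.eq_unit_mul_pow_irreducible hc0 hπ
    have hy : y = uKmap O K w * piU (K := K) π hπ ^ (m : ℤ) := by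
      apply Units.ext
      rw [Units.val_mul, Units.val_zpow_eq_zpow_val, piU_val, uKmap_val, zpow_natCast,
        ← map_pow, ← map_mul, hyc, hw]
    obtain ⟨hUy, hVy⟩ := dec_eq π hπ hy
    rw [tameB, hUy, hVy, ha]
    rcases Nat.eq_zero_or_pos m with hm | hm
    · subst hm
      simp
    · have hresc : residue O c = 0 := by
        rw [hw, map_mul, map_pow, hπres, zero_pow (by omega), mul_zero]
      have hres1 : residue O ((decU π hπ x : Oˣ) : O) = 1 := by
        rw [hc, map_sub, map_one] at hresc
        linear_combination -hresc
      have hru1 : RUmap O (decU π hπ x) = 1 := by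
        apply Units.ext
        rw [Units.val_one]
        exact hres1
      rw [hru1, ofMul_one]
      simp
  · -- positive valuation
    set a : ℤ := decV π hπ x with haa
    set n : ℕ := a.toNat with hn
    have hna : (n : ℤ) = a := by omega
    set c : O := 1 - ((decU π hπ x : Oˣ) : O) * π ^ n with hc
    have hresc : residue O c = 1 := by
      rw [hc, map_sub, map_one, map_mul, map_pow, hπres, zero_pow (by omega), mul_zero,
        sub_zero]
    have hcu : IsUnit c := by
      by_contra hcu
      have h0 : residue O c = 0 :=
        (IsLocalRing.residue_eq_zero_iff c).mpr
          ((IsLocalRing.mem_maximalIdeal c).mpr (mem_nonunits_iff.mpr hcu))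
      rw [hresc] at h0
      exact one_ne_zero h0
    have hy : y = uKmap O K hcu.unit * piU (K := K) π hπ ^ (0 : ℤ) := by
      apply Units.ext
      rw [Units.val_mul, Units.val_zpow_eq_zpow_val, piU_val, uKmap_val, hcu.unit_spec,
        zpow_zero, mul_one, hc, map_sub, map_one, map_mul, map_pow]
      have hyv : (y : K) = 1 - (x : K) := by linear_combination h
      rw [hyv, dec_spec_val π hπ x, ← haa, ← hna, zpow_natCast]
    obtain ⟨hUy, hVy⟩ := dec_eq π hπ hy
    have hru1 : RUmap O hcu.unit = 1 := by
      apply Units.ext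
      rw [Units.val_one]
      show residue O (hcu.unit : O) = 1
      rw [hcu.unit_spec]
      exact hresc
    rw [tameB, hUy, hVy, hru1, ofMul_one, ← haa]
    simp

/-- The tame symbol as a biadditive map. -/
noncomputable def tameF : Additive Kˣ →+ Additive Kˣ →+ Additive (ResidueField O)ˣ :=
  AddMonoidHom.mk'
    (fun x => AddMonoidHom.mk' (fun y => tameB (K := K) π hπ x.toMul y.toMul)
      (fun y y' => tameB_add_right π hπ _ _ _))
    (fun x x' => AddMonoidHom.ext fun y => tameB_add_left π hπ _ _ _)

theorem tameF_smul (r : ℤ) (m n : Additive Kˣ) :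
    tameF (K := K) π hπ (r • m) n = tameF (K := K) π hπ m (r • n) := by
  show tameB (K := K) π hπ (Additive.toMul (r • m)) n.toMul
      = tameB (K := K) π hπ m.toMul (Additive.toMul (r • n))
  rw [toMul_zsmul, toMul_zsmul, tameB_zpow_left, tameB_zpow_right]

/-- The tame symbol on the tensor square. -/
noncomputable def tameT : (Additive Kˣ ⊗[ℤ] Additive Kˣ) →+ Additive (ResidueField O)ˣ :=
  TensorProduct.liftAddHom (tameF (K := K) π hπ) (tameF_smul π hπ)

theorem steinberg_le_ker :
    SteinbergRel K ≤ LinearMap.ker (tameT (K := K) π hπ).toIntLinearMap := by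
  rw [SteinbergRel, Submodule.span_le]
  rintro t ⟨x, y, hxy, rfl⟩
  simp only [SetLike.mem_coe, LinearMap.mem_ker, AddMonoidHom.coe_toIntLinearMap]
  show tameT (K := K) π hπ (Additive.ofMul x ⊗ₜ Additive.ofMul y) = 0
  rw [tameT, TensorProduct.liftAddHom_tmul]
  exact tameB_steinberg π hπ hxy

/-- The tame symbol on `K₂`. -/
noncomputable def tameHom : MilnorK2 K →+ Additive (ResidueField O)ˣ :=
  (Submodule.liftQ (SteinbergRel K) (tameT (K := K) π hπ).toIntLinearMap
    (steinberg_le_ker π hπ)).toAddMonoidHom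

theorem tameHom_symbol (x y : Kˣ) :
    tameHom (K := K) π hπ (milnorSymbol x y) = tameB (K := K) π hπ x y :=
  rfl

theorem tameHom_cond1 (u : Oˣ) (πK : Kˣ) (hπK : (πK : K) = algebraMap O K π) :
    tameHom (K := K) π hπ (milnorSymbol (uKmap O K u) πK)
      = Additive.ofMul (RUmap O u) := by
  have hπU : πK = piU (K := K) π hπ := Units.ext (by rw [hπK, piU_val])
  rw [hπU, tameHom_symbol, tameB]
  obtain ⟨h1, h2⟩ := dec_unit (K := K) π hπ u
  obtain ⟨h3, h4⟩ := dec_piU (K := K) π hπ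
  rw [h1, h2, h3, h4, map_one, ofMul_one]
  module

theorem tameHom_cond2 (u v : Oˣ) :
    tameHom (K := K) π hπ (milnorSymbol (uKmap O K u) (uKmap O K v)) = 0 := by
  rw [tameHom_symbol, tameB]
  obtain ⟨h1, h2⟩ := dec_unit (K := K) π hπ u
  obtain ⟨h3, h4⟩ := dec_unit (K := K) π hπ v
  rw [h1, h2, h3, h4]
  simp

theorem tame_cond_eval (e : MilnorK2 K →+ Additive (ResidueField O)ˣ)
    (h1 : ∀ (u : Oˣ) (πK : Kˣ), (πK : K) = algebraMap O K π →
      e (milnorSymbol (uKmap O K u) πK) = Additive.ofMul (RUmap O u))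
    (h2 : ∀ u v : Oˣ, e (milnorSymbol (uKmap O K u) (uKmap O K v)) = 0)
    (x y : Kˣ) :
    e (milnorSymbol x y)
      = decV π hπ y • Additive.ofMul (RUmap O (decU π hπ x))
        + (-decV π hπ x) • Additive.ofMul (RUmap O (decU π hπ y))
        + (decV π hπ x * decV π hπ y) • Additive.ofMul (RUmap O (-1)) := by
  have he_uπ : ∀ u : Oˣ,
      e (milnorSymbol (uKmap O K u) (piU (K := K) π hπ)) = Additive.ofMul (RUmap O u) :=
    fun u => h1 u _ rfl
  have he_πu : ∀ u : Oˣ,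
      e (milnorSymbol (piU (K := K) π hπ) (uKmap O K u))
        = -Additive.ofMul (RUmap O u) := by
    intro u
    rw [milnorSymbol_anticomm, map_neg, he_uπ]
  have hneg : -piU (K := K) π hπ = uKmap O K (-1) * piU (K := K) π hπ := by
    apply Units.ext
    rw [Units.val_neg, Units.val_mul, uKmap_val, piU_val, Units.val_neg, Units.val_one,
      map_neg, map_one, neg_one_mul]
  have he_ππ : e (milnorSymbol (piU (K := K) π hπ) (piU (K := K) π hπ))
      = Additive.ofMul (RUmap O (-1)) := by
    have h0 : milnorSymbol (piU (K := K) π hπ) (-piU (K := K) π hπ) = 0 :=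
      milnorSymbol_neg_self _
    rw [hneg, milnorSymbol_mul_right, milnorSymbol_anticomm] at h0
    have h3 := congrArg e h0
    rw [map_add, map_neg, he_uπ, map_zero] at h3
    have h4 := neg_add_eq_zero.mp h3
    exact h4.symm
  have expand : milnorSymbol x y
      = milnorSymbol (uKmap O K (decU π hπ x)) (uKmap O K (decU π hπ y))
        + decV π hπ y • milnorSymbol (uKmap O K (decU π hπ x)) (piU (K := K) π hπ)
        + decV π hπ x • milnorSymbol (piU (K := K) π hπ) (uKmap O K (decU π hπ y))
        + decV π hπ x • decV π hπ y •
            milnorSymbol (piU (K := K) π hπ) (piU (K := K) π hπ) := by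
    conv_lhs => rw [dec_spec π hπ x, dec_spec π hπ y]
    rw [milnorSymbol_mul_left, milnorSymbol_zpow_left, milnorSymbol_mul_right,
      milnorSymbol_mul_right, milnorSymbol_zpow_right, milnorSymbol_zpow_right, smul_add]
    abel
  rw [expand, map_add, map_add, map_add, map_zsmul, map_zsmul, map_zsmul, map_zsmul,
    h2, he_uπ, he_πu, he_ππ]
  module

end TameAux2

/-- Let `K` be a complete discretely valued field with valuation ring `O`, residue field
`k` and uniformizer `π`.  There is a unique homomorphism `∂ : K₂(K) → k^×` (the tame
symbol) with `∂({u, π}) = ū` and `∂({u, v}) = 1` for all units `u, v` of `O`. -/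
theorem tame_symbol_exists_unique
    (O K : Type*) [CommRing O] [IsDomain O] [IsDiscreteValuationRing O]
    [IsAdicComplete (maximalIdeal O) O]
    [Field K] [Algebra O K] [IsFractionRing O K]
    (π : O) (hπ : Irreducible π) :
    ∃! d : MilnorK2 K →+ Additive (ResidueField O)ˣ,
      (∀ (u : Oˣ) (πK : Kˣ), (πK : K) = algebraMap O K π →
          d (milnorSymbol (Units.map (algebraMap O K).toMonoidHom u) πK)
            = Additive.ofMul (Units.map (residue O).toMonoidHom u)) ∧
        ∀ u v : Oˣ,
          d (milnorSymbol (Units.map (algebraMap O K).toMonoidHom u)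
              (Units.map (algebraMap O K).toMonoidHom v)) = 0 := by
  have hcond1 : ∀ (u : Oˣ) (πK : Kˣ), (πK : K) = algebraMap O K π →
      tameHom (K := K) π hπ
          (milnorSymbol (Units.map (algebraMap O K).toMonoidHom u) πK)
        = Additive.ofMul (Units.map (residue O).toMonoidHom u) :=
    fun u πK h => tameHom_cond1 π hπ u πK h
  have hcond2 : ∀ u v : Oˣ,
      tameHom (K := K) π hπ
          (milnorSymbol (Units.map (algebraMap O K).toMonoidHom u)
            (Units.map (algebraMap O K).toMonoidHom v)) = 0 :=
    fun u v => tameHom_cond2 π hπ u v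
  refine ⟨tameHom (K := K) π hπ, ⟨hcond1, hcond2⟩, ?_⟩
  intro d hd
  apply AddMonoidHom.ext
  intro z
  obtain ⟨t, rfl⟩ := Submodule.Quotient.mk_surjective _ z
  induction t using TensorProduct.induction_on with
  | zero =>
      rw [Submodule.Quotient.mk_zero, map_zero, map_zero]
  | tmul x y =>
      have h1 := tame_cond_eval π hπ d hd.1 hd.2 x.toMul y.toMul
      have h2 := tame_cond_eval π hπ (tameHom (K := K) π hπ) hcond1 hcond2 x.toMul y.toMul
      exact h1.trans h2.symm
  | add s t hs ht =>
      rw [Submodule.Quotient.mk_add, map_add, map_add, hs, ht]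
end

section
/- Let K be a complete discretely valued field with residue field k and let L/K be a finite unramified extension (i.e. a uniformizer of K remains a uniformizer of L and the residue extension is separable). Then 1 + M_K ⊆ N_{L/K}(L^×), i.e. every principal unit of K is a norm from L. -/
open IsLocalRing

/-- Let `K` be a complete discretely valued field with valuation ring `A`, and `L/K` a
finite unramified extension with valuation ring `B` (the maximal ideal of `A` generates
that of `B`, and the residue extension is separable).  Then every principal unit of `K`
is a norm from `L` : `1 + M_K ⊆ N_{L/K}(L^×)`. -/
theorem principal_units_are_norms_of_unramified
    (A B K L : Type*) [CommRing A] [IsDomain A] [IsDiscreteValuationRing A]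
    [IsAdicComplete (maximalIdeal A) A]
    [CommRing B] [IsDomain B] [IsDiscreteValuationRing B]
    [Field K] [Field L] [Algebra A K] [IsFractionRing A K]
    [Algebra B L] [IsFractionRing B L]
    [Algebra A B] [Algebra K L] [Algebra A L]
    [IsScalarTower A B L] [IsScalarTower A K L]
    [FiniteDimensional K L] [Module.Finite A B]
    (hunr : Ideal.map (algebraMap A B) (maximalIdeal A) = maximalIdeal B)
    [Algebra (ResidueField A) (ResidueField B)]
    (hres : ∀ a : A,
      algebraMap (ResidueField A) (ResidueField B) (residue A a) = residue B (algebraMap A B a))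
    [Algebra.IsSeparable (ResidueField A) (ResidueField B)] :
    ∀ x : A, x - 1 ∈ maximalIdeal A →
      ∃ y : L, Algebra.norm K y = algebraMap A K x := by
  classical
  intro x hx
  -- basic injectivity and freeness
  have hAL : Function.Injective (algebraMap A L) := by
    rw [IsScalarTower.algebraMap_eq A K L]
    exact (algebraMap K L).injective.comp (IsFractionRing.injective A K)
  have hAB : Function.Injective (algebraMap A B) := by
    intro a b h
    apply hAL
    rw [IsScalarTower.algebraMap_eq A B L, RingHom.comp_apply, RingHom.comp_apply, h]
  haveI : Module.IsTorsionFree A B := Module.isTorsionFree_iff_algebraMap_injective.mpr hAB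
  haveI : Module.Free A B := Module.free_of_finite_type_torsion_free'
  -- norm compatibility between `A → B` and `K → L`
  haveI : Algebra.IsAlgebraic K L := Algebra.IsAlgebraic.of_finite K L
  haveI : IsIntegralClosure B A L := IsIntegralClosure.of_isIntegrallyClosed B A L
  haveI : IsLocalization (Algebra.algebraMapSubmonoid B (nonZeroDivisors A)) L :=
    IsIntegralClosure.isLocalization A K L B
  have hNorm : ∀ b : B, Algebra.norm K (algebraMap B L b) = algebraMap A K (Algebra.norm A b) :=
    fun b => Algebra.norm_localization A (nonZeroDivisors A) b
  -- the uniformizer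
  obtain ⟨π, hπ⟩ := (IsPrincipalIdealRing.principal (maximalIdeal A)).principal
  rw [Ideal.submodule_span_eq] at hπ
  have hmemA : ∀ a : A, a ∈ maximalIdeal A ↔ π ∣ a := by
    intro a; rw [hπ, Ideal.mem_span_singleton]
  -- units of the local rings
  have hunitA : ∀ a : A, a - 1 ∈ maximalIdeal A → IsUnit a := by
    intro a ha
    by_contra h
    have ha' : a ∈ maximalIdeal A := h
    have h1 : (1 : A) ∈ maximalIdeal A := by
      have := (maximalIdeal A).sub_mem ha' ha
      simpa using this
    exact (Ideal.ne_top_iff_one _).mp (Ideal.IsMaximal.ne_top inferInstance) h1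
  have hunitB : ∀ b : B, b - 1 ∈ maximalIdeal B → IsUnit b := by
    intro b hb
    by_contra h
    have hb' : b ∈ maximalIdeal B := h
    have h1 : (1 : B) ∈ maximalIdeal B := by
      have := (maximalIdeal B).sub_mem hb' hb
      simpa using this
    exact (Ideal.ne_top_iff_one _).mp (Ideal.IsMaximal.ne_top inferInstance) h1
  -- the residue-field comparison equivalence
  haveI hpSmax : ((maximalIdeal A).map (algebraMap A B)).IsMaximal := by
    rw [hunr]; infer_instance
  letI : Field (A ⧸ maximalIdeal A) := Ideal.Quotient.field _
  letI : Field (B ⧸ (maximalIdeal A).map (algebraMap A B)) := Ideal.Quotient.field _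
  let e₂ : ResidueField B ≃+* (B ⧸ (maximalIdeal A).map (algebraMap A B)) :=
    (Ideal.quotEquivOfEq hunr).symm
  let e₁ : ResidueField A ≃+* (A ⧸ maximalIdeal A) := RingEquiv.refl _
  have hcompat : (algebraMap (A ⧸ maximalIdeal A)
        (B ⧸ (maximalIdeal A).map (algebraMap A B))).comp
      (e₁ : ResidueField A →+* (A ⧸ maximalIdeal A)) =
      (e₂ : ResidueField B →+* (B ⧸ (maximalIdeal A).map (algebraMap A B))).comp
        (algebraMap (ResidueField A) (ResidueField B)) := by
    refine RingHom.ext fun a => ?_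
    obtain ⟨a, rfl⟩ := Ideal.Quotient.mk_surjective (I := maximalIdeal A) a
    show Ideal.Quotient.mk _ (algebraMap A B a) =
      e₂ (algebraMap (ResidueField A) (ResidueField B) (residue A a))
    rw [hres a]
    rfl
  -- finiteness and separability of the canonical residue extension
  haveI : Module.Finite A (B ⧸ (maximalIdeal A).map (algebraMap A B)) :=
    Module.Finite.of_surjective
      (IsScalarTower.toAlgHom A B (B ⧸ (maximalIdeal A).map (algebraMap A B))).toLinearMap
      Ideal.Quotient.mk_surjective
  haveI : Module.Finite (A ⧸ maximalIdeal A) (B ⧸ (maximalIdeal A).map (algebraMap A B)) :=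
    Module.Finite.of_restrictScalars_finite A _ _
  haveI : Algebra.IsSeparable (A ⧸ maximalIdeal A)
      (B ⧸ (maximalIdeal A).map (algebraMap A B)) :=
    Algebra.IsSeparable.of_equiv_equiv e₁ e₂ hcompat
  -- surjectivity of the trace modulo the maximal ideal
  have htrace : ∀ a : A, ∃ t : B, Algebra.trace A B t - a ∈ maximalIdeal A := by
    intro a
    obtain ⟨z, hz⟩ := Algebra.trace_surjective (A ⧸ maximalIdeal A)
      (B ⧸ (maximalIdeal A).map (algebraMap A B)) (Ideal.Quotient.mk (maximalIdeal A) a)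
    obtain ⟨t, rfl⟩ := Ideal.Quotient.mk_surjective z
    exact ⟨t, (Ideal.Quotient.mk_eq_mk_iff_sub_mem _ _).mp
      ((Algebra.trace_quotient_mk t).symm.trans hz)⟩
  -- membership of `π` powers in the maximal ideal of `B`
  have hπB : ∀ (k : ℕ) (t : B), (π ^ (k + 1)) • t ∈ maximalIdeal B := by
    intro k t
    have h1 : algebraMap A B π ∈ maximalIdeal B := by
      rw [← hunr]
      exact Ideal.mem_map_of_mem _ (by rw [hmemA])
    rw [Algebra.smul_def, map_pow]
    exact Ideal.mul_mem_right _ _ (Ideal.pow_mem_of_mem _ h1 _ (Nat.succ_pos k))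
  -- the key approximation step
  have key : ∀ (n : ℕ) (s : A), ∃ (t : B) (c : A),
      1 + π ^ (n + 1) * s =
        Algebra.norm A (1 + π ^ (n + 1) • t) * (1 + π ^ (n + 2) * c) := by
    intro n s
    obtain ⟨t, htmem⟩ := htrace s
    obtain ⟨d, hd⟩ := (hmemA _).mp htmem
    obtain ⟨r, hr⟩ := Algebra.norm_one_add_smul (π ^ (n + 1)) t
    have hNunit : IsUnit (Algebra.norm A (1 + π ^ (n + 1) • t)) := by
      apply hunitA
      rw [hmemA, hr]
      exact ⟨Algebra.trace A B t * π ^ n + r * (π ^ n * π ^ (n + 1)), by ring⟩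
    obtain ⟨u, hu⟩ := hNunit
    set c₀ : A := -d - r * π ^ n with hc₀
    refine ⟨t, c₀ * ↑u⁻¹, ?_⟩
    have huN : Algebra.norm A (1 + π ^ (n + 1) • t) * ↑u⁻¹ = 1 := by
      rw [← hu]; exact u.mul_inv
    have hexp : Algebra.norm A (1 + π ^ (n + 1) • t) * (1 + π ^ (n + 2) * (c₀ * ↑u⁻¹)) =
        Algebra.norm A (1 + π ^ (n + 1) • t) + π ^ (n + 2) * c₀ := by
      rw [mul_add, mul_one]
      congr 1
      rw [show Algebra.norm A (1 + π ^ (n + 1) • t) * (π ^ (n + 2) * (c₀ * ↑u⁻¹)) =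
        π ^ (n + 2) * c₀ * (Algebra.norm A (1 + π ^ (n + 1) • t) * ↑u⁻¹) from by ring, huN,
        mul_one]
    rw [hexp, hr, hc₀]
    linear_combination (-(π ^ (n + 1))) * hd
  -- the recursively defined sequence of approximations
  set T : ℕ → A → B := fun n s => (key n s).choose with hT
  set C : ℕ → A → A := fun n s => (key n s).choose_spec.choose with hC
  have spec : ∀ (n : ℕ) (s : A),
      1 + π ^ (n + 1) * s =
        Algebra.norm A (1 + π ^ (n + 1) • T n s) * (1 + π ^ (n + 2) * C n s) :=
    fun n s => (key n s).choose_spec.choose_spec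
  obtain ⟨s₀, hs₀⟩ := (hmemA _).mp hx
  set G : ℕ → B × A := fun n =>
    Nat.rec ((1 : B), s₀) (fun n g => (g.1 * (1 + π ^ (n + 1) • T n g.2), C n g.2)) n with hG
  have hGsucc : ∀ n, G (n + 1) = ((G n).1 * (1 + π ^ (n + 1) • T n (G n).2), C n (G n).2) :=
    fun n => rfl
  -- the main invariant
  have hInv : ∀ n, x = Algebra.norm A (G n).1 * (1 + π ^ (n + 1) * (G n).2) := by
    intro n
    induction n with
    | zero =>
      show x = Algebra.norm A (1 : B) * (1 + π ^ 1 * s₀)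
      rw [map_one, one_mul, pow_one]
      linear_combination hs₀
    | succ n ih =>
      rw [hGsucc n, map_mul, mul_assoc, ← spec n (G n).2]
      exact ih
  -- each partial product is a unit
  have hGu : ∀ n, IsUnit (G n).1 := by
    intro n
    induction n with
    | zero => exact isUnit_one
    | succ n ih =>
      rw [hGsucc n]
      refine ih.mul (hunitB _ ?_)
      simpa using hπB n (T n (G n).2)
  -- Cauchy property of partial products
  have hstep : ∀ n, ∃ w : B, (G (n + 1)).1 - (G n).1 = π ^ (n + 1) • w := by
    intro n
    refine ⟨(G n).1 * T n (G n).2, ?_⟩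
    rw [hGsucc n]
    show (G n).1 * (1 + π ^ (n + 1) • T n (G n).2) - (G n).1 = _
    rw [mul_add, mul_one, add_sub_cancel_left, mul_smul_comm]
  have hdiff : ∀ m n, m ≤ n → ∃ w : B, (G n).1 - (G m).1 = π ^ m • w := by
    intro m n hmn
    induction n, hmn using Nat.le_induction with
    | base => exact ⟨0, by simp⟩
    | succ n hmn ih =>
      obtain ⟨w, hw⟩ := ih
      obtain ⟨v, hv⟩ := hstep n
      refine ⟨π ^ (n + 1 - m) • v + w, ?_⟩
      have h1 : (G (n + 1)).1 - (G m).1 =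
          ((G (n + 1)).1 - (G n).1) + ((G n).1 - (G m).1) := by ring
      rw [h1, hw, hv, smul_add, smul_smul, ← pow_add,
        Nat.add_sub_cancel' (Nat.le_succ_of_le hmn)]
  -- identify the submodule `(maximalIdeal A)^m • ⊤` of `A`
  have htop : ∀ m : ℕ, ((maximalIdeal A) ^ m • ⊤ : Submodule A A) =
      ((maximalIdeal A) ^ m : Ideal A) := by
    intro m
    rw [smul_eq_mul, Ideal.mul_top]
  have hπn : ∀ m : ℕ, ((maximalIdeal A) ^ m : Ideal A) = Ideal.span {π ^ m} := by
    intro m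
    rw [hπ, Ideal.span_singleton_pow]
  -- choose the coordinatewise limits
  set ι := Module.Free.ChooseBasisIndex A B with hι
  set b : Module.Basis ι A B := Module.Free.chooseBasis A B with hb
  have hLimEx : ∀ i : ι, ∃ Li : A, ∀ n,
      b.repr (G n).1 i ≡ Li [SMOD ((maximalIdeal A) ^ n • ⊤ : Submodule A A)] := by
    intro i
    apply IsPrecomplete.prec (inferInstance : IsPrecomplete (maximalIdeal A) A)
    intro m n hmn
    rw [SModEq.sub_mem, htop m, hπn m, Ideal.mem_span_singleton]
    obtain ⟨w, hw⟩ := hdiff m n hmn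
    have : b.repr (G m).1 i - b.repr (G n).1 i = -(π ^ m * b.repr w i) := by
      have := congrArg (fun z => b.repr z i) hw
      simp only [map_sub, map_smul, Finsupp.sub_apply, Finsupp.smul_apply, smul_eq_mul] at this
      linear_combination -this
    rw [this]
    exact (Dvd.dvd.mul_right dvd_rfl _).neg_right
  choose Lim hLim using hLimEx
  -- the limit element
  set y : B := ∑ i, Lim i • b i with hy
  have hyG : ∀ n, ∃ w : B, y - (G n).1 = π ^ n • w := by
    intro n
    have hcoef : ∀ i : ι, ∃ a : A, Lim i - b.repr (G n).1 i = π ^ n * a := by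
      intro i
      have := (hLim i n)
      rw [SModEq.sub_mem, htop n, hπn n, Ideal.mem_span_singleton] at this
      obtain ⟨a, ha⟩ := this
      exact ⟨-a, by linear_combination -ha⟩
    choose a ha using hcoef
    refine ⟨∑ i, a i • b i, ?_⟩
    have hGrepr : (G n).1 = ∑ i, b.repr (G n).1 i • b i := (b.sum_repr (G n).1).symm
    rw [hy, hGrepr, ← Finset.sum_sub_distrib, Finset.smul_sum]
    refine Finset.sum_congr rfl fun i _ => ?_
    rw [← sub_smul, ha i, smul_smul, mul_smul]
  -- the norm of the limit equals `x` modulo every power of the maximal ideal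
  have hfin : ∀ n : ℕ, Algebra.norm A y - x ∈ ((maximalIdeal A) ^ n • ⊤ : Submodule A A) := by
    intro n
    rw [htop n, hπn n, Ideal.mem_span_singleton]
    obtain ⟨w, hw⟩ := hyG n
    obtain ⟨Pu, hPu⟩ := hGu n
    set z : B := (↑Pu⁻¹ : B) * w with hz
    have hPz : (G n).1 * z = w := by
      rw [hz, ← hPu, ← mul_assoc, Units.mul_inv, one_mul]
    have hyP : y = (G n).1 * (1 + π ^ n • z) := by
      rw [mul_add, mul_one, mul_smul_comm, hPz]
      have : y = (G n).1 + π ^ n • w := by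
        rw [← hw]; ring
      exact this
    obtain ⟨r, hr⟩ := Algebra.norm_one_add_smul (π ^ n) z
    have hnormy : Algebra.norm A y = Algebra.norm A (G n).1 *
        (1 + Algebra.trace A B z * π ^ n + r * (π ^ n) ^ 2) := by
      rw [hyP, map_mul, hr]
    refine ⟨Algebra.norm A (G n).1 * (Algebra.trace A B z + r * π ^ n) -
      Algebra.norm A (G n).1 * π * (G n).2, ?_⟩
    linear_combination hnormy - hInv n
  have hfinal : Algebra.norm A y = x := by
    have h0 := IsHausdorff.haus (inferInstance : IsHausdorff (maximalIdeal A) A)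
      (Algebra.norm A y - x) (fun n => SModEq.zero.mpr (hfin n))
    exact sub_eq_zero.mp h0
  exact ⟨algebraMap B L y, by rw [hNorm y, hfinal]⟩
end

section
/- Let K be a Henselian discretely valued field with completion K̂, and let n ≥ 1. Then the inclusion K ⊆ K̂ induces an isomorphism K^×/(1 + M_K^n) ≅ K̂^×/(1 + M_{K̂}^n). -/
open IsLocalRing

lemma aux_divide {A B : Type*} [CommRing A] [IsDomain A] [IsDiscreteValuationRing A]
    [CommRing B] [IsDomain B] [IsDiscreteValuationRing B] [Algebra A B]
    (hinj : Function.Injective (algebraMap A B))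
    (hcomap : ∀ m : ℕ,
      (maximalIdeal B ^ m).comap (algebraMap A B) = maximalIdeal A ^ m)
    {π : A} (hπ : Irreducible π) (n : ℕ) {b : B} (hb : b ∈ maximalIdeal B ^ n) :
    ∀ (m : ℕ) (a' : A), algebraMap A B a' = b * (algebraMap A B π) ^ m →
      ∃ c ∈ maximalIdeal A ^ n, a' = c * π ^ m := by
  have hπB : algebraMap A B π ∈ maximalIdeal B := by
    have h1 := hcomap 1
    simp only [pow_one] at h1
    have : π ∈ maximalIdeal A := (mem_maximalIdeal _).2 hπ.not_isUnit
    rw [← h1, Ideal.mem_comap] at this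
    exact this
  intro m
  induction m with
  | zero =>
    intro a' h
    refine ⟨a', ?_, by simp⟩
    rw [← hcomap n, Ideal.mem_comap]
    simpa [h] using hb
  | succ m ih =>
    intro a' h
    have ha'M : a' ∈ maximalIdeal A := by
      have h1 := hcomap 1
      simp only [pow_one] at h1
      rw [← h1, Ideal.mem_comap, h]
      exact Ideal.mul_mem_left _ _ ((maximalIdeal B).pow_mem_of_mem hπB _ (Nat.succ_pos m))
    have hspan : maximalIdeal A = Ideal.span {π} :=
      (IsDiscreteValuationRing.irreducible_iff_uniformizer π).1 hπ
    rw [hspan, Ideal.mem_span_singleton] at ha'M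
    obtain ⟨a'', rfl⟩ := ha'M
    have hπB0 : algebraMap A B π ≠ 0 := by
      simpa [map_eq_zero_iff _ hinj] using hπ.ne_zero
    have h2 : algebraMap A B a'' = b * (algebraMap A B π) ^ m := by
      apply mul_left_cancel₀ hπB0
      rw [← map_mul]
      rw [h]; ring
    obtain ⟨c, hc, rfl⟩ := ih a'' h2
    exact ⟨c, hc, by ring⟩

lemma aux_unit {A B : Type*} [CommRing A] [IsLocalRing A]
    [CommRing B] [IsLocalRing B] [Algebra A B]
    (hM : Ideal.map (algebraMap A B) (maximalIdeal A) = maximalIdeal B)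
    (hdense : ∀ (b : B) (m : ℕ), ∃ a : A, b - algebraMap A B a ∈ maximalIdeal B ^ m)
    (n : ℕ) (hn : 1 ≤ n) (v : Bˣ) :
    ∃ (a : Aˣ) (b : B), b ∈ maximalIdeal B ^ n ∧
      (v : B) = algebraMap A B (a : A) * (1 + b) := by
  obtain ⟨a₀, ha₀⟩ := hdense (v : B) n
  set e : B := (v : B) - algebraMap A B a₀ with he
  set x : B := (↑v⁻¹ : B) * e with hx
  have hxmem : x ∈ maximalIdeal B ^ n := Ideal.mul_mem_left _ _ ha₀
  have hxM : x ∈ maximalIdeal B := (Ideal.pow_le_self (by omega)) hxmem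
  have ha₀eq : algebraMap A B a₀ = (v : B) * (1 - x) := by
    have : (v : B) * ((↑v⁻¹ : B) * e) = e := by
      rw [← mul_assoc, Units.mul_inv, one_mul]
    rw [mul_sub, mul_one, ← hx] at *
    rw [this]
    simp [he]
  have h1x : IsUnit (1 - x) := by
    by_contra h
    have : (1 : B) - x ∈ maximalIdeal B := (mem_maximalIdeal _).2 h
    have : (1 : B) ∈ maximalIdeal B := by
      have := Ideal.add_mem _ this hxM
      simpa using this
    exact (maximalIdeal.isMaximal B).ne_top (Ideal.eq_top_of_isUnit_mem _ this isUnit_one)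
  obtain ⟨y, hy⟩ := h1x
  have haunit : IsUnit a₀ := by
    by_contra h
    have hmem : a₀ ∈ maximalIdeal A := (mem_maximalIdeal _).2 h
    have : algebraMap A B a₀ ∈ maximalIdeal B := by
      rw [← hM]; exact Ideal.mem_map_of_mem _ hmem
    rw [ha₀eq] at this
    have : IsUnit ((v : B) * (1 - x)) := (Units.isUnit v).mul ⟨y, hy⟩
    exact (maximalIdeal.isMaximal B).ne_top
      (Ideal.eq_top_of_isUnit_mem _ (by rwa [ha₀eq] at *) this)
  refine ⟨haunit.unit, (↑y⁻¹ : B) * x, Ideal.mul_mem_left _ _ hxmem, ?_⟩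
  have hyv : (v : B) = algebraMap A B a₀ * (↑y⁻¹ : B) := by
    rw [ha₀eq, ← hy, mul_assoc, Units.mul_inv, mul_one]
  rw [hyv, haunit.unit_spec]
  congr 1
  refine Units.inv_eq_of_mul_eq_one_right ?_
  calc (y : B) * ((1:B) + (↑y⁻¹ : B) * x) = (y:B) + ((y:B) * (↑y⁻¹:B)) * x := by ring
    _ = (1 - x) + 1 * x := by rw [Units.mul_inv, hy]
    _ = 1 := by ring

/-- Let `K` be a Henselian discretely valued field with valuation ring `A`, and let
`K̂` (here `L`) be its completion, with valuation ring `B`.  Then for every `n ≥ 1` the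
inclusion `K ⊆ K̂` induces an isomorphism `K^×/(1 + M_K^n) ≅ K̂^×/(1 + M_{K̂}^n)`:
the natural map is surjective modulo `1 + M_{K̂}^n` and an element of `K^×` maps into
`1 + M_{K̂}^n` exactly when it lies in `1 + M_K^n`. -/
theorem units_mod_principal_units_iso_completion
    (A B K L : Type*) [CommRing A] [IsDomain A] [IsDiscreteValuationRing A]
    [HenselianLocalRing A]
    [CommRing B] [IsDomain B] [IsDiscreteValuationRing B]
    [IsAdicComplete (maximalIdeal B) B]
    [Field K] [Field L] [Algebra A K] [IsFractionRing A K]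
    [Algebra B L] [IsFractionRing B L]
    [Algebra A B] [Algebra K L] [Algebra A L]
    [IsScalarTower A B L] [IsScalarTower A K L]
    (hM : Ideal.map (algebraMap A B) (maximalIdeal A) = maximalIdeal B)
    (hcomap : ∀ m : ℕ,
      (maximalIdeal B ^ m).comap (algebraMap A B) = maximalIdeal A ^ m)
    (hdense : ∀ (b : B) (m : ℕ), ∃ a : A, b - algebraMap A B a ∈ maximalIdeal B ^ m)
    (n : ℕ) (hn : 1 ≤ n) :
    (∀ w : Lˣ, ∃ u : Kˣ, ∃ b ∈ maximalIdeal B ^ n,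
        (((Units.map (algebraMap K L).toMonoidHom u)⁻¹ * w : Lˣ) : L)
          = 1 + algebraMap B L b) ∧
      ∀ u : Kˣ,
        (∃ b ∈ maximalIdeal B ^ n, algebraMap K L (u : K) = 1 + algebraMap B L b) ↔
          ∃ a ∈ maximalIdeal A ^ n, (u : K) = 1 + algebraMap A K a := by
  -- basic injectivity facts
  have hinjAL : Function.Injective (algebraMap A L) := by
    rw [IsScalarTower.algebraMap_eq A K L]
    exact (algebraMap K L).injective.comp (IsFractionRing.injective A K)
  have hinjAB : Function.Injective (algebraMap A B) := by
    have h1 := hinjAL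
    rw [IsScalarTower.algebraMap_eq A B L] at h1
    exact Function.Injective.of_comp h1
  have hinjBL : Function.Injective (algebraMap B L) := IsFractionRing.injective B L
  -- uniformizers
  obtain ⟨π, hπ⟩ := IsDiscreteValuationRing.exists_irreducible A
  have hπ0 : π ≠ 0 := hπ.ne_zero
  set πB : B := algebraMap A B π with hπBdef
  have hπB0 : πB ≠ 0 := by
    simpa [hπBdef, map_eq_zero_iff _ hinjAB] using hπ0
  have hπBirr : Irreducible πB := by
    rw [IsDiscreteValuationRing.irreducible_iff_uniformizer]
    rw [← hM, (IsDiscreteValuationRing.irreducible_iff_uniformizer π).1 hπ,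
      Ideal.map_span]
    simp [hπBdef]
  have hπK0 : algebraMap A K π ≠ 0 := by
    simpa [map_eq_zero_iff _ (IsFractionRing.injective A K)] using hπ0
  have hπL0 : algebraMap B L πB ≠ 0 := by
    simpa [map_eq_zero_iff _ hinjBL] using hπB0
  have htower : algebraMap K L (algebraMap A K π) = algebraMap B L πB := by
    rw [← IsScalarTower.algebraMap_apply A K L, IsScalarTower.algebraMap_apply A B L]
  constructor
  · -- surjectivity
    intro w
    have hw0 : (w : L) ≠ 0 := w.ne_zero
    obtain ⟨c, d, hdmem, hcd⟩ := IsFractionRing.div_surjective (A := B) (w : L)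
    have hd0 : d ≠ 0 := nonZeroDivisors.ne_zero hdmem
    have hdL0 : algebraMap B L d ≠ 0 := by
      simpa [map_eq_zero_iff _ hinjBL] using hd0
    have hc0 : c ≠ 0 := by
      rintro rfl
      simp at hcd
      exact hw0 hcd.symm
    obtain ⟨j, uc, hc⟩ := IsDiscreteValuationRing.eq_unit_mul_pow_irreducible hc0 hπBirr
    obtain ⟨k, ud, hdk⟩ := IsDiscreteValuationRing.eq_unit_mul_pow_irreducible hd0 hπBirr
    obtain ⟨a, b, hb, hv⟩ := aux_unit hM hdense n hn (uc * ud⁻¹)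
    set πK : Kˣ := Units.mk0 (algebraMap A K π) hπK0 with hπKdef
    set aK : Kˣ := Units.map (algebraMap A K).toMonoidHom a with haKdef
    refine ⟨aK * πK ^ j * (πK ^ k)⁻¹, b, hb, ?_⟩
    have hucud : (uc : B) = algebraMap A B (a : A) * (1 + b) * (ud : B) := by
      have h1 : ((uc * ud⁻¹ : Bˣ) : B) * (ud : B) = (uc : B) := by
        rw [Units.val_mul, mul_assoc]
        simp
      rw [← h1, hv]
    -- now compute in L
    have hudL0 : algebraMap B L (ud : B) ≠ 0 := by
      simpa [map_eq_zero_iff _ hinjBL] using (Units.ne_zero ud)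
    have haL0 : algebraMap K L (aK : K) ≠ 0 := by
      have h0 : (aK : K) ≠ 0 := Units.ne_zero aK
      simpa [map_eq_zero_iff _ (algebraMap K L).injective] using h0
    have key : algebraMap B L (uc : B)
        = algebraMap K L (aK : K) * (1 + algebraMap B L b) * algebraMap B L (ud : B) := by
      rw [hucud]
      push_cast [map_mul, map_add, map_one]
      congr 2
      rw [haKdef]
      simp only [Units.coe_map, RingHom.toMonoidHom_eq_coe, MonoidHom.coe_coe]
      rw [← IsScalarTower.algebraMap_apply A K L, IsScalarTower.algebraMap_apply A B L]
    have hfu : ((Units.map (algebraMap K L).toMonoidHom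
        (aK * πK ^ j * (πK ^ k)⁻¹) : Lˣ) : L)
        = algebraMap K L (aK : K) * algebraMap B L πB ^ j
            / algebraMap B L πB ^ k := by
      rw [Units.coe_map]
      simp only [RingHom.toMonoidHom_eq_coe, MonoidHom.coe_coe]
      rw [Units.val_mul, Units.val_mul, Units.val_inv_eq_inv_val, Units.val_pow_eq_pow_val,
        Units.val_pow_eq_pow_val, hπKdef, Units.val_mk0]
      rw [map_mul, map_mul, map_inv₀, map_pow, map_pow, htower]
      ring
    rw [Units.val_mul, Units.val_inv_eq_inv_val, hfu, ← hcd, hc, hdk,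
      map_mul, map_mul, map_pow, map_pow, key]
    field_simp
  · -- the kernel computation
    intro u
    constructor
    · rintro ⟨b, hb, hub⟩
      have hy : algebraMap K L ((u : K) - 1) = algebraMap B L b := by
        rw [map_sub, map_one, hub]; ring
      rcases eq_or_ne ((u : K) - 1) 0 with h0 | h0
      · refine ⟨0, Ideal.zero_mem _, ?_⟩
        rw [map_zero, add_zero, ← sub_eq_zero, h0]
      · obtain ⟨s, t, htmem, hst⟩ := IsFractionRing.div_surjective (A := A) ((u : K) - 1)
        have ht0 : t ≠ 0 := nonZeroDivisors.ne_zero htmem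
        obtain ⟨m, ut, hut⟩ := IsDiscreteValuationRing.eq_unit_mul_pow_irreducible ht0 hπ
        set s' : A := (↑ut⁻¹ : A) * s with hs'def
        have hs'K : algebraMap A K s' = ((u : K) - 1) * algebraMap A K π ^ m := by
          have htK0 : algebraMap A K t ≠ 0 := by
            simpa [map_eq_zero_iff _ (IsFractionRing.injective A K)] using ht0
          have hutK0 : algebraMap A K (ut : A) ≠ 0 := by
            simpa [map_eq_zero_iff _ (IsFractionRing.injective A K)] using
              (Units.ne_zero ut)
          have : algebraMap A K s = ((u : K) - 1) * algebraMap A K t := by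
            rw [← hst, div_mul_cancel₀ _ htK0]
          rw [hs'def, map_mul, this, hut, map_mul, map_pow]
          have huu : algebraMap A K (↑ut⁻¹ : A) * algebraMap A K (ut : A) = 1 := by
            rw [← map_mul]
            simp
          calc algebraMap A K (↑ut⁻¹ : A) * (((u:K) - 1) * (algebraMap A K (ut : A) * algebraMap A K π ^ m))
              = (algebraMap A K (↑ut⁻¹ : A) * algebraMap A K (ut : A)) * (((u:K)-1) * algebraMap A K π ^ m) := by ring
            _ = ((u:K)-1) * algebraMap A K π ^ m := by rw [huu, one_mul]
        have hs'B : algebraMap A B s' = b * πB ^ m := by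
          apply hinjBL
          rw [← IsScalarTower.algebraMap_apply A B L, IsScalarTower.algebraMap_apply A K L,
            hs'K, map_mul, map_pow, hy, htower, map_mul, map_pow]
        obtain ⟨cA, hcA, hs'eq⟩ := aux_divide hinjAB hcomap hπ n hb m s' hs'B
        have h2 : algebraMap A K cA * algebraMap A K π ^ m
            = ((u : K) - 1) * algebraMap A K π ^ m := by
          rw [← map_pow, ← map_mul, ← hs'eq, hs'K, map_pow]
        have h3 := mul_right_cancel₀ (pow_ne_zero m hπK0) h2
        exact ⟨cA, hcA, by rw [h3]; ring⟩
    · rintro ⟨a, ha, hua⟩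
      refine ⟨algebraMap A B a, ?_, ?_⟩
      · rw [← hM, ← Ideal.map_pow] at *
        exact Ideal.mem_map_of_mem _ ha
      · rw [hua, map_add, map_one, ← IsScalarTower.algebraMap_apply A K L,
          IsScalarTower.algebraMap_apply A B L]
end
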